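/- In the Weyl group of type B_n or C_n, for r = n, the element v = (2,3,...,n-1,n,1) (one-line notation) is the unique maximal element of W^{I_n} with v(ω_n) ≥ 0, and w = (2,3,...,n-1,n,-1) = s_1 v is the unique minimal element of W^{I_n} with w(ω_n) ≤ 0; moreover w(ω_n) = -v(ω_n). -/

import Mathlib

open Equiv Finset

noncomputable section

/-- Reflection in `ε_b - ε_a`: the signed transposition `(a,b)(-a,-b)`. -/
def tswap (a b : ℤ) : Equiv.Perm ℤ := Equiv.swap a b * Equiv.swap (-a) (-b)

/-- Reflection in `ε_a + ε_b`: the signed transposition `(a,-b)(-a,b)`. -/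
def tswapNeg (a b : ℤ) : Equiv.Perm ℤ := Equiv.swap a (-b) * Equiv.swap (-a) b

/-- Coxeter generators of the hyperoctahedral group `B_n`:
`s_1 = (1,-1)` and `s_i = (i-1,i)(-(i-1),-i)` for `i ≥ 2`. -/
def bgen (i : ℤ) : Equiv.Perm ℤ := if i = 1 then Equiv.swap 1 (-1) else tswap (i - 1) i

/-- Coxeter generators of the Weyl group `D_n`:
`s_1 = (1,-2)(-1,2)` and `s_i = (i-1,i)(-(i-1),-i)` for `i ≥ 2`. -/
def dgen (i : ℤ) : Equiv.Perm ℤ := if i = 1 then tswapNeg 1 2 else tswap (i - 1) i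

def BGens (n : ℕ) : Set (Equiv.Perm ℤ) := bgen '' {i : ℤ | 1 ≤ i ∧ i ≤ (n : ℤ)}

def DGens (n : ℕ) : Set (Equiv.Perm ℤ) := dgen '' {i : ℤ | 1 ≤ i ∧ i ≤ (n : ℤ)}

/-- Adjacent transpositions of the linearly ordered set `{-n,…,-1,1,…,n}`:
Coxeter generators of the symmetric group on these `2n` symbols. -/
def SGens (n : ℕ) : Set (Equiv.Perm ℤ) :=
  (fun i : ℤ => Equiv.swap i (if i = -1 then 1 else i + 1)) ''
    {i : ℤ | -(n : ℤ) ≤ i ∧ i ≤ (n : ℤ) - 1 ∧ i ≠ 0}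

/-- Word length of `σ` with respect to a generating set `S` (Coxeter length). -/
def wordLen (S : Set (Equiv.Perm ℤ)) (σ : Equiv.Perm ℤ) : ℕ :=
  sInf {k | ∃ l : List (Equiv.Perm ℤ), l.length = k ∧ (∀ x ∈ l, x ∈ S) ∧ l.prod = σ}

/-- Reflections: conjugates of the generators. -/
def IsCoxRefl (S : Set (Equiv.Perm ℤ)) (t : Equiv.Perm ℤ) : Prop :=
  ∃ w ∈ Subgroup.closure S, ∃ s ∈ S, t = w * s * w⁻¹

/-- The Bruhat order associated to the generating set `S`, as the reflexive-transitive
closure of the relation `u < t·u` for reflections `t` increasing the length. -/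
def bruhat (S : Set (Equiv.Perm ℤ)) : Equiv.Perm ℤ → Equiv.Perm ℤ → Prop :=
  Relation.ReflTransGen
    (fun u v => (∃ t, IsCoxRefl S t ∧ v = t * u) ∧ wordLen S u < wordLen S v)

/-- A signed permutation of `{-n,…,-1,1,…,n}`. -/
def IsSignedPerm (n : ℕ) (σ : Equiv.Perm ℤ) : Prop :=
  (∀ i : ℤ, σ (-i) = -σ i) ∧ ∀ i : ℤ, (n : ℤ) < |i| → σ i = i

def negCount (n : ℕ) (σ : Equiv.Perm ℤ) : ℕ :=
  ((Finset.Icc (1 : ℤ) (n : ℤ)).filter (fun i => σ i < 0)).card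

def invCount (n : ℕ) (σ : Equiv.Perm ℤ) : ℕ :=
  (((Finset.Icc (-(n : ℤ)) (n : ℤ)) ×ˢ (Finset.Icc (-(n : ℤ)) (n : ℤ))).filter
    (fun p => p.1 ≠ 0 ∧ p.2 ≠ 0 ∧ p.1 < p.2 ∧ σ p.2 < σ p.1)).card

/-- An even-signed permutation: an element of the Weyl group `D_n`. -/
def IsEvenSignedPerm (n : ℕ) (σ : Equiv.Perm ℤ) : Prop :=
  IsSignedPerm n σ ∧ Even (negCount n σ)

/-- The action of a signed permutation on a weight written in `ε`-coordinates,
where `σ · ε_j = ε_{σ(j)}` and `ε_{-k} = -ε_k`. -/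
def wAct (σ : Equiv.Perm ℤ) (χ : ℤ → ℚ) : ℤ → ℚ :=
  fun k => if 0 < σ⁻¹ k then χ (σ⁻¹ k) else -χ (-(σ⁻¹ k))

/-- `ε`-coordinates of the fundamental weight `ω_r` (types `B`/`C`, with the labeling
`s_1 = (1,-1)`; for `r = 1` this is the type-`C` normalization `ε_1 + ⋯ + ε_n`,
a positive multiple of the type-`B` one). -/
def omegaWt (n r : ℕ) : ℤ → ℚ := fun j => if (r : ℤ) ≤ j ∧ j ≤ (n : ℤ) then 1 else 0

/-- `ε`-coordinates of the fundamental weight `ω_r` of type `D_n`. -/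
def omegaWtD (n r : ℕ) : ℤ → ℚ :=
  if r = 1 then fun j => if 1 ≤ j ∧ j ≤ (n : ℤ) then 1 / 2 else 0
  else if r = 2 then fun j =>
    if j = 1 then -(1 / 2) else if 2 ≤ j ∧ j ≤ (n : ℤ) then 1 / 2 else 0
  else omegaWt n r

/-- `ε`-coordinates of the simple root `α_j = ε_j - ε_{j-1}` (valid for `j ≥ 2` in types
`B`/`C` and for `j ≥ 3` in type `D`). -/
def alphaGen (j : ℤ) : ℤ → ℚ :=
  fun t => (if t = j then 1 else 0) - (if t = j - 1 then 1 else 0)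

/-- `ε`-coordinates of the simple root `α_1 = ε_1 + ε_2` of type `D`. -/
def alphaD1 : ℤ → ℚ := fun t => (if t = 1 then 1 else 0) + (if t = 2 then 1 else 0)

/-- `ε`-coordinates of the simple root `α_2 = ε_2 - ε_1` of type `D`. -/
def alphaD2 : ℤ → ℚ := fun t => (if t = 2 then 1 else 0) - (if t = 1 then 1 else 0)

/-- `χ` is a nonnegative combination of the simple roots, type `B`/`C`. -/
def NonnegBC (n : ℕ) (χ : ℤ → ℚ) : Prop :=
  ∀ k ∈ Finset.Icc (1 : ℤ) (n : ℤ), 0 ≤ ∑ j ∈ Finset.Icc k (n : ℤ), χ j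

/-- `χ` is a nonpositive combination of the simple roots, type `B`/`C`. -/
def NonposBC (n : ℕ) (χ : ℤ → ℚ) : Prop :=
  ∀ k ∈ Finset.Icc (1 : ℤ) (n : ℤ), ∑ j ∈ Finset.Icc k (n : ℤ), χ j ≤ 0

/-- `χ` is a nonnegative combination of the simple roots, type `D`. -/
def NonnegD (n : ℕ) (χ : ℤ → ℚ) : Prop :=
  (∀ k ∈ Finset.Icc (3 : ℤ) (n : ℤ), 0 ≤ ∑ j ∈ Finset.Icc k (n : ℤ), χ j) ∧
    (0 ≤ ∑ j ∈ Finset.Icc (1 : ℤ) (n : ℤ), χ j) ∧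
    χ 1 ≤ ∑ j ∈ Finset.Icc (2 : ℤ) (n : ℤ), χ j

/-- `χ` is a nonpositive combination of the simple roots, type `D`. -/
def NonposD (n : ℕ) (χ : ℤ → ℚ) : Prop :=
  (∀ k ∈ Finset.Icc (3 : ℤ) (n : ℤ), ∑ j ∈ Finset.Icc k (n : ℤ), χ j ≤ 0) ∧
    (∑ j ∈ Finset.Icc (1 : ℤ) (n : ℤ), χ j ≤ 0) ∧
    ∑ j ∈ Finset.Icc (2 : ℤ) (n : ℤ), χ j ≤ χ 1

/-- `v ∈ W^{I_r}`: minimal length coset representative modulo the maximal parabolic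
subgroup omitting `s_r`, type `B`/`C`. -/
def IsMinRepB (n : ℕ) (r : ℤ) (v : Equiv.Perm ℤ) : Prop :=
  IsSignedPerm n v ∧
    ∀ u ∈ Subgroup.closure (bgen '' {i : ℤ | 1 ≤ i ∧ i ≤ (n : ℤ) ∧ i ≠ r}),
      wordLen (BGens n) v ≤ wordLen (BGens n) (v * u)

/-- `v ∈ W^{I_r}`: minimal length coset representative modulo the maximal parabolic
subgroup omitting `s_r`, type `D`. -/
def IsMinRepD (n : ℕ) (r : ℤ) (v : Equiv.Perm ℤ) : Prop :=
  IsEvenSignedPerm n v ∧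
    ∀ u ∈ Subgroup.closure (dgen '' {i : ℤ | 1 ≤ i ∧ i ≤ (n : ℤ) ∧ i ≠ r}),
      wordLen (DGens n) v ≤ wordLen (DGens n) (v * u)

/-- Nonemptiness of the `T`-semistable locus of the Richardson variety `X^v_w ⊆ G/P_r`
with respect to `L_r`, types `B`/`C`: by the standard monomial basis of
`H⁰(X^v_w, L_r)`, this holds iff there is a Bruhat chain `v = u_1 ≤ ⋯ ≤ u_k = w`
in `W^{I_r}` with `Σ_l u_l(ω_r) = 0`. -/
def SSNonemptyB (n r : ℕ) (v w : Equiv.Perm ℤ) : Prop :=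
  ∃ l : List (Equiv.Perm ℤ), l ≠ [] ∧ l.head? = some v ∧ l.getLast? = some w ∧
    l.Chain' (bruhat (BGens n)) ∧ (∀ u ∈ l, IsMinRepB n r u) ∧
    ∀ t : ℤ, (l.map (fun u => wAct u (omegaWt n r) t)).sum = 0

/-- Nonemptiness of the `T`-semistable locus of the Richardson variety, type `D`. -/
def SSNonemptyD (n r : ℕ) (v w : Equiv.Perm ℤ) : Prop :=
  ∃ l : List (Equiv.Perm ℤ), l ≠ [] ∧ l.head? = some v ∧ l.getLast? = some w ∧
    l.Chain' (bruhat (DGens n)) ∧ (∀ u ∈ l, IsMinRepD n r u) ∧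
    ∀ t : ℤ, (l.map (fun u => wAct u (omegaWtD n r) t)).sum = 0

lemma tswap_apply (p q x : ℤ) (h1 : 1 ≤ p) (hpq : p < q) :
    tswap p q x = if x = p then q else if x = q then p else
      if x = -p then -q else if x = -q then -p else x := by
  show Equiv.swap p q (Equiv.swap (-p) (-q) x) = _
  rw [Equiv.swap_apply_def, Equiv.swap_apply_def]
  split_ifs <;> omega

lemma bgen_apply_one (x : ℤ) : bgen 1 x = if x = 1 then -1 else if x = -1 then 1 else x := by
  rw [bgen, if_pos rfl, Equiv.swap_apply_def]

lemma bgen_apply (i x : ℤ) (hi : 2 ≤ i) :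
    bgen i x = if x = i - 1 then i else if x = i then i - 1 else
      if x = -(i-1) then -i else if x = -i then -(i-1) else x := by
  rw [bgen, if_neg (by omega)]
  exact tswap_apply (i-1) i x (by omega) (by omega)

lemma sp_zero {n : ℕ} {σ : Equiv.Perm ℤ} (h : IsSignedPerm n σ) : σ 0 = 0 := by
  have := h.1 0; simp at this; omega

lemma sp_abs_le {n : ℕ} {σ : Equiv.Perm ℤ} (h : IsSignedPerm n σ) {k : ℤ}
    (hk : |k| ≤ (n:ℤ)) : |σ k| ≤ (n:ℤ) := by
  by_contra hc
  push_neg at hc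
  have h2 : σ (σ k) = σ k := h.2 (σ k) hc
  have h3 : σ k = k := σ.injective h2
  rw [h3] at hc
  exact absurd hk (by omega)

lemma sp_mul {n : ℕ} {σ τ : Equiv.Perm ℤ} (h : IsSignedPerm n σ) (h' : IsSignedPerm n τ) :
    IsSignedPerm n (σ * τ) := by
  constructor
  · intro i; simp only [Perm.mul_apply, h'.1 i, h.1]
  · intro i hi; simp only [Perm.mul_apply, h'.2 i hi, h.2 i hi]

lemma sp_one (n : ℕ) : IsSignedPerm n 1 := by
  constructor <;> intros <;> simp

lemma sp_inv {n : ℕ} {σ : Equiv.Perm ℤ} (h : IsSignedPerm n σ) : IsSignedPerm n σ⁻¹ := by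
  constructor
  · intro i
    apply σ.injective
    simp only [show ∀ x, σ (σ⁻¹ x) = x from σ.apply_symm_apply]
    rw [h.1 (σ⁻¹ i)]
    simp
  · intro i hi
    have := h.2 i hi
    conv_lhs => rw [← this]
    simp

lemma sp_bgen {n : ℕ} {i : ℤ} (h1 : 1 ≤ i) (h2 : i ≤ (n:ℤ)) : IsSignedPerm n (bgen i) := by
  rcases eq_or_ne i 1 with rfl | hne
  · constructor
    · intro x; rw [bgen_apply_one, bgen_apply_one]; split_ifs <;> omega
    · intro x hx
      rcases abs_cases x with ⟨he,_⟩ | ⟨he,_⟩ <;> rw [he] at hx <;>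
        · rw [bgen_apply_one]; split_ifs <;> omega
  · have hi2 : 2 ≤ i := by omega
    constructor
    · intro x; rw [bgen_apply i _ hi2, bgen_apply i _ hi2]; split_ifs <;> omega
    · intro x hx
      rcases abs_cases x with ⟨he,_⟩ | ⟨he,_⟩ <;> rw [he] at hx <;>
        · rw [bgen_apply i _ hi2]; split_ifs <;> omega

lemma sp_ne_zero {n : ℕ} {σ : Equiv.Perm ℤ} (h : IsSignedPerm n σ) {k : ℤ} (hk : k ≠ 0) :
    σ k ≠ 0 := by
  intro hc
  exact hk (σ.injective (hc.trans (sp_zero h).symm))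

lemma sp_ext {n : ℕ} {σ τ : Equiv.Perm ℤ} (h : IsSignedPerm n σ) (h' : IsSignedPerm n τ)
    (heq : ∀ x : ℤ, 0 ≤ x → σ x = τ x) : σ = τ := by
  ext x
  rcases le_or_gt 0 x with hx | hx
  · exact heq x hx
  · have : σ (-(-x)) = τ (-(-x)) := by rw [h.1, h'.1, heq (-x) (by omega)]
    simpa using this

lemma bgen_invol {i : ℤ} (h1 : 1 ≤ i) : bgen i * bgen i = 1 := by
  ext x
  rcases eq_or_ne i 1 with rfl | hne
  · simp only [Perm.mul_apply, Perm.one_apply, bgen_apply_one]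
    rcases eq_or_ne x 1 with rfl | hx1
    · norm_num
    · rcases eq_or_ne x (-1) with rfl | hx2
      · norm_num
      · rw [if_neg hx1, if_neg hx2, if_neg hx1, if_neg hx2]
  · have hi2 : 2 ≤ i := by omega
    simp only [Perm.mul_apply, Perm.one_apply, bgen_apply _ _ hi2]
    split_ifs <;> omega

lemma swap_mono {p q x y : ℤ} (hpq : p < q) (hp : p ≠ 0) (hq : q ≠ 0)
    (hmid : ∀ z, p < z → z < q → z = 0) (hx : x ≠ 0) (hy : y ≠ 0) (hxy : x < y)
    (hne : ¬(x = p ∧ y = q)) : Equiv.swap p q x < Equiv.swap p q y := by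
  have hxm : x ≤ p ∨ q ≤ x := by
    by_contra hc; push_neg at hc; exact hx (hmid x (by omega) (by omega))
  have hym : y ≤ p ∨ q ≤ y := by
    by_contra hc; push_neg at hc; exact hy (hmid y (by omega) (by omega))
  rw [Equiv.swap_apply_def, Equiv.swap_apply_def]
  split_ifs <;> omega

lemma swap_mem_Icc {n : ℕ} {p q z : ℤ} (hpn : -(n:ℤ) ≤ p) (hqn : q ≤ (n:ℤ)) (hpq : p < q)
    (hz1 : -(n:ℤ) ≤ z) (hz2 : z ≤ (n:ℤ)) :
    -(n:ℤ) ≤ Equiv.swap p q z ∧ Equiv.swap p q z ≤ (n:ℤ) := by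
  rw [Equiv.swap_apply_def]; split_ifs <;> omega

lemma swap_ne_zero {p q z : ℤ} (hp : p ≠ 0) (hq : q ≠ 0) (hz : z ≠ 0) :
    Equiv.swap p q z ≠ 0 := by
  rw [Equiv.swap_apply_def]; split_ifs <;> omega

lemma card_erase_ite {α : Type*} [DecidableEq α] (s : Finset α) (a : α) :
    s.card = (s.erase a).card + (if a ∈ s then 1 else 0) := by
  split_ifs with h
  · exact (Finset.card_erase_add_one h).symm
  · rw [Finset.erase_eq_of_notMem h]; omega

lemma inv_toggle (n : ℕ) (σ : Equiv.Perm ℤ) (p q : ℤ) (hpq : p < q) (hp : p ≠ 0) (hq : q ≠ 0)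
    (hmid : ∀ z, p < z → z < q → z = 0) (hpn : -(n:ℤ) ≤ p) (hqn : q ≤ (n:ℤ)) :
    invCount n (σ * Equiv.swap p q) + (if σ q < σ p then 1 else 0)
      = invCount n σ + (if σ q < σ p then 0 else 1) := by
  classical
  set s := Equiv.swap p q with hs
  have hinv : ∀ z, s (s z) = z := fun z => Equiv.swap_apply_self p q z
  set D := ((Finset.Icc (-(n : ℤ)) (n : ℤ)) ×ˢ (Finset.Icc (-(n : ℤ)) (n : ℤ))) with hD
  have hmemD : ∀ a : ℤ × ℤ, a ∈ D → (s a.1, s a.2) ∈ D := by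
    intro a ha
    simp only [hD, Finset.mem_product, Finset.mem_Icc] at ha ⊢
    exact ⟨⟨(swap_mem_Icc hpn hqn hpq ha.1.1 ha.1.2).1,
            (swap_mem_Icc hpn hqn hpq ha.1.1 ha.1.2).2⟩,
           ⟨(swap_mem_Icc hpn hqn hpq ha.2.1 ha.2.2).1,
            (swap_mem_Icc hpn hqn hpq ha.2.1 ha.2.2).2⟩⟩
  have hpqD : (p, q) ∈ D := by
    simp only [hD, Finset.mem_product, Finset.mem_Icc]
    omega
  set A := (D.filter (fun a : ℤ × ℤ => a.1 ≠ 0 ∧ a.2 ≠ 0 ∧ a.1 < a.2 ∧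
      (σ * s) a.2 < (σ * s) a.1)).erase (p, q) with hA
  set B := (D.filter (fun a : ℤ × ℤ => a.1 ≠ 0 ∧ a.2 ≠ 0 ∧ a.1 < a.2 ∧
      σ a.2 < σ a.1)).erase (p, q) with hB
  have key : A.card = B.card := by
    apply Finset.card_bij (fun a _ => (s a.1, s a.2))
    · rintro ⟨x, y⟩ ha
      rw [hA, Finset.mem_erase, Finset.mem_filter] at ha
      simp only [hA, Finset.mem_erase, Finset.mem_filter, Prod.mk.injEq, Equiv.Perm.mul_apply,
        ne_eq] at ha
      obtain ⟨hne, haD, hx0, hy0, hxy, hval⟩ := ha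
      have hxyne : ¬(x = p ∧ y = q) := by
        intro ⟨h1, h2⟩; exact hne ⟨h1, h2⟩
      simp only [hB, Finset.mem_erase, Finset.mem_filter, Prod.mk.injEq, ne_eq]
      refine ⟨?_, hmemD (x, y) haD, swap_ne_zero hp hq hx0, swap_ne_zero hp hq hy0,
        swap_mono hpq hp hq hmid hx0 hy0 hxy hxyne, hval⟩
      intro ⟨h1, h2⟩
      have : x = q := by
        have := congrArg s h1; rw [hinv] at this; rw [this, Equiv.swap_apply_left]
      have : y = p := by
        have := congrArg s h2; rw [hinv] at this; rw [this, Equiv.swap_apply_right]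
      omega
    · rintro ⟨x, y⟩ hx ⟨x', y'⟩ hy h
      simp only [Prod.mk.injEq] at h ⊢
      exact ⟨s.injective h.1, s.injective h.2⟩
    · rintro ⟨x, y⟩ hb
      refine ⟨(s x, s y), ?_, ?_⟩
      · simp only [hB, Finset.mem_erase, Finset.mem_filter, Prod.mk.injEq, ne_eq] at hb
        obtain ⟨hne, hbD, hx0, hy0, hxy, hval⟩ := hb
        have hxyne : ¬(x = p ∧ y = q) := by
          intro ⟨h1, h2⟩; exact hne ⟨h1, h2⟩
        rw [hA, Finset.mem_erase, Finset.mem_filter]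
        simp only [hA, Finset.mem_erase, Finset.mem_filter, Prod.mk.injEq, ne_eq,
          Equiv.Perm.mul_apply]
        refine ⟨?_, hmemD (x, y) hbD, swap_ne_zero hp hq hx0, swap_ne_zero hp hq hy0,
          swap_mono hpq hp hq hmid hx0 hy0 hxy hxyne, by rw [hinv, hinv]; exact hval⟩
        intro ⟨h1, h2⟩
        have hxq : x = q := by
          have := congrArg s h1; rw [hinv] at this; rw [this, Equiv.swap_apply_left]
        have hyp : y = p := by
          have := congrArg s h2; rw [hinv] at this; rw [this, Equiv.swap_apply_right]
        omega
      · simp only [Prod.mk.injEq]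
        exact ⟨hinv x, hinv y⟩
  have hne_val : σ p ≠ σ q := fun h => (by omega : p ≠ q) (σ.injective h)
  have e1 : invCount n (σ * s) = A.card + (if σ p < σ q then 1 else 0) := by
    rw [invCount, card_erase_ite _ (p, q)]
    congr 1
    simp only [Finset.mem_filter, Equiv.Perm.mul_apply, hs, Equiv.swap_apply_left,
      Equiv.swap_apply_right]
    by_cases h : σ p < σ q
    · rw [if_pos h, if_pos ⟨hpqD, hp, hq, hpq, h⟩]
    · rw [if_neg h, if_neg (by rintro ⟨_, _, _, _, hlt⟩; exact h hlt)]
  have e2 : invCount n σ = B.card + (if σ q < σ p then 1 else 0) := by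
    rw [invCount, card_erase_ite _ (p, q)]
    congr 1
    simp only [Finset.mem_filter]
    by_cases h : σ q < σ p
    · rw [if_pos h, if_pos ⟨hpqD, hp, hq, hpq, h⟩]
    · rw [if_neg h, if_neg (by rintro ⟨_, _, _, _, hlt⟩; exact h hlt)]
  rw [e1, e2, key]
  split_ifs <;> omega

lemma neg_bgen_ge2 (n : ℕ) (σ : Equiv.Perm ℤ) (i : ℤ) (h2 : 2 ≤ i) (h3 : i ≤ (n:ℤ)) :
    negCount n (σ * bgen i) = negCount n σ := by
  classical
  apply Finset.card_bij (fun k _ => bgen i k)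
  · intro k hk
    rw [Finset.mem_filter] at hk ⊢
    simp only [Finset.mem_filter, Finset.mem_Icc, Equiv.Perm.mul_apply] at hk ⊢
    refine ⟨?_, hk.2⟩
    rw [bgen_apply _ _ h2]
    have := hk.1
    split_ifs <;> omega
  · intro a _ b _ h
    exact (bgen i).injective h
  · intro k hk
    simp only [Finset.mem_filter, Finset.mem_Icc] at hk
    refine ⟨bgen i k, ?_, ?_⟩
    · rw [Finset.mem_filter]
      simp only [Finset.mem_filter, Finset.mem_Icc, Equiv.Perm.mul_apply]
      have hb : bgen i (bgen i k) = k := by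
        have := bgen_invol (i := i) (by omega)
        calc bgen i (bgen i k) = (bgen i * bgen i) k := rfl
        _ = k := by rw [this]; rfl
      constructor
      · rw [bgen_apply _ _ h2]
        have := hk.1
        split_ifs <;> omega
      · rw [hb]; exact hk.2
    · have := bgen_invol (i := i) (by omega)
      calc bgen i (bgen i k) = (bgen i * bgen i) k := rfl
      _ = k := by rw [this]; rfl

lemma neg_split (n : ℕ) (hn : 1 ≤ n) (σ : Equiv.Perm ℤ) :
    negCount n σ = (if σ 1 < 0 then 1 else 0)
      + ((Finset.Icc (2:ℤ) (n:ℤ)).filter (fun k => σ k < 0)).card := by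
  classical
  have h : Finset.Icc (1:ℤ) (n:ℤ) = insert 1 (Finset.Icc (2:ℤ) (n:ℤ)) := by
    ext x; simp only [Finset.mem_Icc, Finset.mem_insert]; omega
  rw [negCount, h, Finset.filter_insert]
  split_ifs with h1
  · rw [Finset.card_insert_of_notMem (by simp)]
    omega
  · omega

lemma neg_bgen1 (n : ℕ) (hn : 1 ≤ n) (σ : Equiv.Perm ℤ) :
    negCount n (σ * bgen 1) + (if σ 1 < 0 then 1 else 0)
      = negCount n σ + (if σ (-1) < 0 then 1 else 0) := by
  rw [neg_split n hn σ, neg_split n hn (σ * bgen 1)]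
  have h1 : (σ * bgen 1) 1 = σ (-1) := by
    simp only [Equiv.Perm.mul_apply, bgen_apply_one]; norm_num
  have h2 : ∀ k, 2 ≤ k → (σ * bgen 1) k = σ k := by
    intro k hk
    simp only [Equiv.Perm.mul_apply, bgen_apply_one]
    rw [if_neg (by omega), if_neg (by omega)]
  have h3 : (Finset.Icc (2:ℤ) (n:ℤ)).filter (fun k => (σ * bgen 1) k < 0)
      = (Finset.Icc (2:ℤ) (n:ℤ)).filter (fun k => σ k < 0) := by
    apply Finset.filter_congr
    intro k hk
    simp only [Finset.mem_Icc] at hk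
    rw [h2 k hk.1]
  rw [h1, h3]
  omega

lemma bgen_factor (i : ℤ) (h2 : 2 ≤ i) :
    bgen i = Equiv.swap (i-1) i * Equiv.swap (-(i-1)) (-i) := by
  rw [bgen, if_neg (by omega)]; rfl

lemma F_step (n : ℕ) (hn : 1 ≤ n) (σ : Equiv.Perm ℤ) (i : ℤ) (h1 : 1 ≤ i) (h2 : i ≤ (n:ℤ)) :
    invCount n (σ * bgen i) + negCount n (σ * bgen i)
      ≤ invCount n σ + negCount n σ + 2 := by
  rcases eq_or_ne i 1 with rfl | hne
  · have hb : bgen 1 = Equiv.swap (-1) 1 := by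
      rw [bgen, if_pos rfl, Equiv.swap_comm]
    have ht := inv_toggle n σ (-1) 1 (by omega) (by omega) (by omega)
      (fun z hz1 hz2 => by omega) (by omega) (by omega)
    have hng := neg_bgen1 n hn σ
    rw [← hb] at ht
    split_ifs at ht hng <;> omega
  · have hi2 : 2 ≤ i := by omega
    have hfac : σ * bgen i = (σ * Equiv.swap (i-1) i) * Equiv.swap (-(i-1)) (-i) := by
      rw [bgen_factor i hi2, mul_assoc]
    have ht1 := inv_toggle n σ (i-1) i (by omega) (by omega) (by omega)
      (fun z hz1 hz2 => by omega) (by omega) (by omega)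
    have hsc : Equiv.swap (-(i-1)) (-i) = Equiv.swap (-i) (-(i-1)) := Equiv.swap_comm _ _
    have ht2 := inv_toggle n (σ * Equiv.swap (i-1) i) (-i) (-(i-1)) (by omega) (by omega)
      (by omega) (fun z hz1 hz2 => by omega) (by omega) (by omega)
    rw [← hsc] at ht2
    rw [← hfac] at ht2
    have hng := neg_bgen_ge2 n σ i hi2 h2
    split_ifs at ht1 ht2 <;> omega

lemma F_desc1 (n : ℕ) (hn : 1 ≤ n) (σ : Equiv.Perm ℤ) (hsp : IsSignedPerm n σ)
    (hneg : σ 1 < 0) :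
    invCount n (σ * bgen 1) + negCount n (σ * bgen 1) + 2
      ≤ invCount n σ + negCount n σ := by
  have hb : bgen 1 = Equiv.swap (-1) 1 := by
    rw [bgen, if_pos rfl, Equiv.swap_comm]
  have ht := inv_toggle n σ (-1) 1 (by omega) (by omega) (by omega)
    (fun z hz1 hz2 => by omega) (by omega) (by omega)
  have hs1 : σ (-1) = -σ 1 := hsp.1 1
  have hcond : σ 1 < σ (-1) := by omega
  rw [← hb] at ht
  have hng := neg_bgen1 n hn σ
  split_ifs at ht hng <;> omega

lemma F_desc2 (n : ℕ) (hn : 1 ≤ n) (σ : Equiv.Perm ℤ) (hsp : IsSignedPerm n σ)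
    (i : ℤ) (hi2 : 2 ≤ i) (hin : i ≤ (n:ℤ)) (hdesc : σ i < σ (i-1)) :
    invCount n (σ * bgen i) + negCount n (σ * bgen i) + 2
      ≤ invCount n σ + negCount n σ := by
  have hfac : σ * bgen i = (σ * Equiv.swap (i-1) i) * Equiv.swap (-(i-1)) (-i) := by
    rw [bgen_factor i hi2, mul_assoc]
  have ht1 := inv_toggle n σ (i-1) i (by omega) (by omega) (by omega)
    (fun z hz1 hz2 => by omega) (by omega) (by omega)
  rw [if_pos hdesc] at ht1
  have ht2 := inv_toggle n (σ * Equiv.swap (i-1) i) (-i) (-(i-1)) (by omega) (by omega)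
    (by omega) (fun z hz1 hz2 => by omega) (by omega) (by omega)
  have hv1 : (σ * Equiv.swap (i-1) i) (-(i-1)) = -σ (i-1) := by
    have : Equiv.swap (i-1) i (-(i-1)) = -(i-1) :=
      Equiv.swap_apply_of_ne_of_ne (by omega) (by omega)
    simp only [Equiv.Perm.mul_apply, this, hsp.1]
  have hv2 : (σ * Equiv.swap (i-1) i) (-i) = -σ i := by
    have : Equiv.swap (i-1) i (-i) = -i :=
      Equiv.swap_apply_of_ne_of_ne (by omega) (by omega)
    simp only [Equiv.Perm.mul_apply, this, hsp.1]
  rw [hv1, hv2,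
    show Equiv.swap (-i) (-(i-1)) = Equiv.swap (-(i-1)) (-i) from Equiv.swap_comm _ _,
    ← hfac] at ht2
  have hng := neg_bgen_ge2 n σ i hi2 hin
  have hc2 : -σ (i-1) < -σ i := by omega
  split_ifs at ht1 ht2 <;> omega

lemma F_one (n : ℕ) : invCount n 1 + negCount n 1 = 0 := by
  have h1 : invCount n 1 = 0 := by
    rw [invCount, Finset.card_eq_zero, Finset.filter_eq_empty_iff]
    rintro ⟨x, y⟩ _ ⟨_, _, h3, h4⟩
    simp only [Equiv.Perm.one_apply] at h4
    omega
  have h2 : negCount n 1 = 0 := by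
    rw [negCount, Finset.card_eq_zero, Finset.filter_eq_empty_iff]
    intro x hx h
    simp only [Finset.mem_Icc] at hx
    simp only [Equiv.Perm.one_apply] at h
    omega
  omega

lemma F_word (n : ℕ) (hn : 1 ≤ n) :
    ∀ l : List (Equiv.Perm ℤ), (∀ x ∈ l, x ∈ BGens n) →
      invCount n l.prod + negCount n l.prod ≤ 2 * l.length := by
  intro l
  induction l using List.reverseRecOn with
  | nil => intro _; simp only [List.prod_nil]; rw [F_one]; omega
  | append_singleton l s ih =>
    intro hmem
    have hls : ∀ x ∈ l, x ∈ BGens n := fun x hx => hmem x (by simp [hx])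
    have hs : s ∈ BGens n := hmem s (by simp)
    obtain ⟨i, ⟨hi1, hi2⟩, rfl⟩ := hs
    rw [List.prod_append, List.prod_singleton, List.length_append]
    have := F_step n hn l.prod i hi1 hi2
    have := ih hls
    simp only [List.length_singleton]
    omega

lemma wordLen_le {S : Set (Equiv.Perm ℤ)} {σ : Equiv.Perm ℤ} (l : List (Equiv.Perm ℤ))
    (h : ∀ x ∈ l, x ∈ S) (hp : l.prod = σ) : wordLen S σ ≤ l.length :=
  Nat.sInf_le ⟨l, rfl, h, hp⟩

lemma wordLen_lower (n : ℕ) (hn : 1 ≤ n) (σ : Equiv.Perm ℤ)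
    (hw : ∃ l : List (Equiv.Perm ℤ), (∀ x ∈ l, x ∈ BGens n) ∧ l.prod = σ) :
    invCount n σ + negCount n σ ≤ 2 * wordLen (BGens n) σ := by
  obtain ⟨l, hl1, hl2⟩ := hw
  have hne : {k | ∃ l : List (Equiv.Perm ℤ), l.length = k ∧ (∀ x ∈ l, x ∈ BGens n) ∧
      l.prod = σ}.Nonempty := ⟨l.length, l, rfl, hl1, hl2⟩
  obtain ⟨l0, hlen, hmem, hprod⟩ := Nat.sInf_mem hne
  rw [wordLen, ← hlen] at *
  rw [← hprod]
  exact F_word n hn l0 hmem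

lemma sp_mono {m n : ℕ} (hmn : m ≤ n) {σ : Equiv.Perm ℤ} (h : IsSignedPerm m σ) :
    IsSignedPerm n σ :=
  ⟨h.1, fun i hi => h.2 i (by omega)⟩

lemma mono_lb (σ : Equiv.Perm ℤ) (m : ℤ) (hpos : 0 < σ 1)
    (hmono : ∀ j : ℤ, 1 ≤ j → j ≤ m - 1 → σ j < σ (j+1)) :
    ∀ k : ℤ, 1 ≤ k → k ≤ m → k ≤ σ k := by
  suffices h : ∀ j : ℕ, (1 + (j:ℤ)) ≤ m → (1 + (j:ℤ)) ≤ σ (1 + (j:ℤ)) by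
    intro k hk1 hk2
    have e : (1 + ((k-1).toNat : ℤ)) = k := by omega
    have := h (k-1).toNat (by omega)
    rwa [e] at this
  intro j
  induction j with
  | zero => intro _; simp; omega
  | succ j ih =>
    intro hj
    have e : (1 + ((j+1 : ℕ) : ℤ)) = (1 + (j:ℤ)) + 1 := by push_cast; ring
    rw [e]
    have h1 := ih (by push_cast at hj ⊢; omega)
    have h2 := hmono (1 + (j:ℤ)) (by omega) (by push_cast at hj; omega)
    omega

lemma mono_ub (σ : Equiv.Perm ℤ) (m M : ℤ) (hub : σ m ≤ M)
    (hmono : ∀ j : ℤ, 1 ≤ j → j ≤ m - 1 → σ j < σ (j+1)) :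
    ∀ k : ℤ, 1 ≤ k → k ≤ m → σ k ≤ M - (m - k) := by
  suffices h : ∀ j : ℕ, 1 ≤ m - (j:ℤ) → σ (m - (j:ℤ)) ≤ M - (j:ℤ) by
    intro k hk1 hk2
    have e : (m - ((m-k).toNat : ℤ)) = k := by omega
    have := h (m-k).toNat (by omega)
    rw [e] at this
    omega
  intro j
  induction j with
  | zero => intro _; simpa using hub
  | succ j ih =>
    intro hj
    have e : (m - ((j+1 : ℕ) : ℤ)) = m - (j:ℤ) - 1 := by push_cast; ring
    rw [e]
    have e2 : (m - (j:ℤ) - 1) + 1 = m - (j:ℤ) := by ring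
    have h2 := hmono (m - (j:ℤ) - 1) (by push_cast at hj; omega) (by push_cast at hj; omega)
    rw [e2] at h2
    have h1 := ih (by push_cast at hj; omega)
    omega

lemma mono_id (m : ℕ) (hm1 : 1 ≤ m) (σ : Equiv.Perm ℤ) (hsp : IsSignedPerm m σ)
    (hpos : 0 < σ 1) (hmono : ∀ j : ℤ, 1 ≤ j → j ≤ (m:ℤ) - 1 → σ j < σ (j+1)) : σ = 1 := by
  have hub : σ (m:ℤ) ≤ (m:ℤ) := by
    have h := sp_abs_le hsp (k := (m:ℤ)) (by simp [abs_of_nonneg])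
    rcases abs_cases (σ (m:ℤ)) with ⟨e,_⟩ | ⟨e,_⟩ <;> omega
  have hfix : ∀ k : ℤ, 1 ≤ k → k ≤ (m:ℤ) → σ k = k := by
    intro k h1 h2
    have ha := mono_lb σ (m:ℤ) hpos hmono k h1 h2
    have hb := mono_ub σ (m:ℤ) (m:ℤ) hub hmono k h1 h2
    omega
  apply sp_ext hsp (sp_one m)
  intro x hx
  simp only [Equiv.Perm.one_apply]
  rcases eq_or_ne x 0 with rfl | hx0
  · exact sp_zero hsp
  · rcases le_or_gt x (m:ℤ) with hxm | hxm
    · exact hfix x (by omega) hxm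
    · exact hsp.2 x (by rw [abs_of_nonneg hx]; omega)

lemma exists_descent (n m : ℕ) (hm1 : 1 ≤ m) (hmn : m ≤ n) (σ : Equiv.Perm ℤ)
    (hsp : IsSignedPerm m σ) (hne : σ ≠ 1) :
    ∃ i : ℤ, 1 ≤ i ∧ i ≤ (m:ℤ) ∧
      invCount n (σ * bgen i) + negCount n (σ * bgen i) + 2
        ≤ invCount n σ + negCount n σ ∧ IsSignedPerm m (σ * bgen i) := by
  have hn : 1 ≤ n := le_trans hm1 hmn
  have hspn : IsSignedPerm n σ := sp_mono hmn hsp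
  by_cases hc1 : σ 1 < 0
  · exact ⟨1, le_refl _, by exact_mod_cast hm1,
      F_desc1 n hn σ hspn hc1, sp_mul hsp (sp_bgen (by omega) (by exact_mod_cast hm1))⟩
  · by_cases hc2 : ∃ j : ℤ, 1 ≤ j ∧ j ≤ (m:ℤ) - 1 ∧ σ (j+1) < σ j
    · obtain ⟨j, hj1, hj2, hj3⟩ := hc2
      refine ⟨j + 1, by omega, by omega, ?_, sp_mul hsp (sp_bgen (by omega) (by omega))⟩
      have e : (j + 1) - 1 = j := by ring
      exact F_desc2 n hn σ hspn (j+1) (by omega) (by omega) (by rw [e]; exact hj3)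
    · exfalso
      apply hne
      push_neg at hc2
      have hpos : 0 < σ 1 := by
        have := sp_ne_zero hsp (k := 1) (by omega)
        omega
      apply mono_id m hm1 σ hsp hpos
      intro j h1 h2
      have hle := hc2 j h1 h2
      have hne2 : σ j ≠ σ (j+1) := fun h => (by omega : j ≠ j + 1) (σ.injective h)
      omega

lemma gen_word (n m : ℕ) (hm1 : 1 ≤ m) (hmn : m ≤ n) :
    ∀ N : ℕ, ∀ σ : Equiv.Perm ℤ, invCount n σ + negCount n σ ≤ N → IsSignedPerm m σ →
      ∃ l : List (Equiv.Perm ℤ), (∀ x ∈ l, ∃ i : ℤ, 1 ≤ i ∧ i ≤ (m:ℤ) ∧ x = bgen i) ∧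
        l.prod = σ ∧ 2 * l.length ≤ invCount n σ + negCount n σ := by
  intro N
  induction N with
  | zero =>
    intro σ hF hsp
    rcases eq_or_ne σ 1 with rfl | hne
    · exact ⟨[], by simp, by simp, by simp⟩
    · obtain ⟨i, _, _, hF2, _⟩ := exists_descent n m hm1 hmn σ hsp hne
      omega
  | succ N ih =>
    intro σ hF hsp
    rcases eq_or_ne σ 1 with rfl | hne
    · exact ⟨[], by simp, by simp, by simp⟩
    · obtain ⟨i, hi1, hi2, hF2, hsp2⟩ := exists_descent n m hm1 hmn σ hsp hne
      obtain ⟨l, hl1, hl2, hl3⟩ := ih (σ * bgen i) (by omega) hsp2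
      refine ⟨l ++ [bgen i], ?_, ?_, ?_⟩
      · intro x hx
        rcases List.mem_append.mp hx with h | h
        · exact hl1 x h
        · simp only [List.mem_singleton] at h
          exact ⟨i, hi1, hi2, h⟩
      · rw [List.prod_append, List.prod_singleton, hl2, mul_assoc,
          bgen_invol (by omega), mul_one]
      · rw [List.length_append, List.length_singleton]
        omega

lemma sp_word (n : ℕ) (hn : 1 ≤ n) (σ : Equiv.Perm ℤ) (h : IsSignedPerm n σ) :
    ∃ l : List (Equiv.Perm ℤ), (∀ x ∈ l, x ∈ BGens n) ∧ l.prod = σ := by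
  obtain ⟨l, hl1, hl2, _⟩ := gen_word n n hn (le_refl n)
    (invCount n σ + negCount n σ) σ (le_refl _) h
  refine ⟨l, fun x hx => ?_, hl2⟩
  obtain ⟨i, hi1, hi2, rfl⟩ := hl1 x hx
  exact ⟨i, ⟨hi1, hi2⟩, rfl⟩

lemma sp_fix_n (n : ℕ) (hn : 1 ≤ n) (σ : Equiv.Perm ℤ) (hsp : IsSignedPerm n σ)
    (hfix : σ (n:ℤ) = (n:ℤ)) : IsSignedPerm (n-1) σ := by
  refine ⟨hsp.1, fun i hi => ?_⟩
  have hcast : ((n-1 : ℕ) : ℤ) = (n:ℤ) - 1 := by omega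
  rw [hcast] at hi
  rcases eq_or_ne i (n:ℤ) with rfl | h1
  · exact hfix
  · rcases eq_or_ne i (-(n:ℤ)) with rfl | h2
    · rw [show (-(n:ℤ)) = -((n:ℤ)) from rfl, hsp.1, hfix]
    · refine hsp.2 i ?_
      rcases abs_cases i with ⟨e,_⟩ | ⟨e,_⟩ <;> rw [e] at hi ⊢ <;> omega

lemma fix_word (n : ℕ) (hn : 1 ≤ n) (σ : Equiv.Perm ℤ) (hsp : IsSignedPerm (n-1) σ) :
    ∃ l : List (Equiv.Perm ℤ),
      (∀ x ∈ l, x ∈ bgen '' {i : ℤ | 1 ≤ i ∧ i ≤ (n:ℤ) ∧ i ≠ (n:ℤ)}) ∧ l.prod = σ := by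
  rcases eq_or_ne n 1 with rfl | hne
  · have : σ = 1 := by
      apply sp_ext hsp (sp_one 0)
      intro x hx
      simp only [Equiv.Perm.one_apply]
      rcases eq_or_ne x 0 with rfl | hx0
      · exact sp_zero hsp
      · refine hsp.2 x ?_
        have hc : ((1-1 : ℕ) : ℤ) = 0 := by norm_num
        rw [hc, abs_of_nonneg hx]
        omega
    exact ⟨[], by simp, by simp [this]⟩
  · have hm1 : 1 ≤ n - 1 := by omega
    obtain ⟨l, hl1, hl2, _⟩ := gen_word n (n-1) hm1 (by omega)
      (invCount n σ + negCount n σ) σ (le_refl _) hsp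
    refine ⟨l, fun x hx => ?_, hl2⟩
    obtain ⟨i, hi1, hi2, rfl⟩ := hl1 x hx
    refine ⟨i, ⟨hi1, by omega, by omega⟩, rfl⟩

lemma fix_mem_closure (n : ℕ) (hn : 1 ≤ n) (σ : Equiv.Perm ℤ) (hsp : IsSignedPerm (n-1) σ) :
    σ ∈ Subgroup.closure (bgen '' {i : ℤ | 1 ≤ i ∧ i ≤ (n:ℤ) ∧ i ≠ (n:ℤ)}) := by
  obtain ⟨l, hl1, hl2⟩ := fix_word n hn σ hsp
  rw [← hl2]
  exact list_prod_mem (fun x hx => Subgroup.subset_closure (hl1 x hx))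

lemma closure_sub_prop (n : ℕ) (hn : 1 ≤ n) (u : Equiv.Perm ℤ)
    (hu : u ∈ Subgroup.closure (bgen '' {i : ℤ | 1 ≤ i ∧ i ≤ (n:ℤ) ∧ i ≠ (n:ℤ)})) :
    IsSignedPerm n u ∧ u (n:ℤ) = (n:ℤ) := by
  induction hu using Subgroup.closure_induction with
  | mem x hx =>
    obtain ⟨i, ⟨hi1, hi2, hi3⟩, rfl⟩ := hx
    refine ⟨sp_bgen hi1 hi2, ?_⟩
    rcases eq_or_ne i 1 with rfl | hne
    · rw [bgen_apply_one]
      have : (2:ℤ) ≤ n := by omega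
      rw [if_neg (by omega), if_neg (by omega)]
    · rw [bgen_apply i _ (by omega)]
      split_ifs <;> omega
  | one => exact ⟨sp_one n, by simp⟩
  | mul x y _ _ hx hy =>
    refine ⟨sp_mul hx.1 hy.1, ?_⟩
    simp only [Equiv.Perm.mul_apply, hy.2, hx.2]
  | inv x _ hx =>
    refine ⟨sp_inv hx.1, ?_⟩
    have := hx.2
    conv_lhs => rw [← this]
    simp

def vword : ℤ → ℕ → List (Equiv.Perm ℤ)
  | _, 0 => []
  | a, (c+1) => bgen (a+1) :: vword (a+1) c

def Vp (a : ℤ) (c : ℕ) : Equiv.Perm ℤ := (vword a c).prod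

lemma vword_length (a : ℤ) (c : ℕ) : (vword a c).length = c := by
  induction c generalizing a with
  | zero => rfl
  | succ c ih => simp [vword, ih]

lemma vword_mem (a : ℤ) (c : ℕ) : ∀ x ∈ vword a c, ∃ i : ℤ, a + 1 ≤ i ∧ i ≤ a + c ∧ x = bgen i := by
  induction c generalizing a with
  | zero => intro x hx; simp [vword] at hx
  | succ c ih =>
    intro x hx
    rcases List.mem_cons.mp hx with rfl | hx'
    · exact ⟨a + 1, le_refl _, by push_cast; omega, rfl⟩
    · obtain ⟨i, h1, h2, h3⟩ := ih (a+1) x hx'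
      exact ⟨i, by omega, by push_cast at h2 ⊢; omega, h3⟩

lemma Vp_succ (a : ℤ) (c : ℕ) : Vp a (c+1) = bgen (a+1) * Vp (a+1) c := by
  rw [Vp, vword, List.prod_cons]; rfl

lemma Vp_zero (a : ℤ) : Vp a 0 = 1 := rfl

lemma Vp_apply (a : ℤ) (c : ℕ) (ha : 1 ≤ a) (x : ℤ) (hx : 0 ≤ x) :
    Vp a c x = if a ≤ x ∧ x < a + c then x + 1 else if x = a + c then a else x := by
  induction c generalizing a with
  | zero =>
    simp only [Vp_zero, Equiv.Perm.one_apply, Nat.cast_zero, add_zero]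
    split_ifs <;> omega
  | succ c ih =>
    rw [Vp_succ]
    have : (bgen (a+1) * Vp (a+1) c) x = bgen (a+1) (Vp (a+1) c x) := rfl
    rw [this, ih (a+1) (by omega), bgen_apply _ _ (by omega)]
    push_cast
    split_ifs <;> omega

lemma Vp_sp (n : ℕ) (a : ℤ) (c : ℕ) (ha : 1 ≤ a) (hac : a + c ≤ (n:ℤ)) :
    IsSignedPerm n (Vp a c) := by
  induction c generalizing a with
  | zero => exact sp_one n
  | succ c ih =>
    rw [Vp_succ]
    push_cast at hac
    exact sp_mul (sp_bgen (by omega) (by omega)) (ih (a+1) (by omega) (by push_cast; omega))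

def cword : ℕ → List (Equiv.Perm ℤ)
  | 0 => [bgen 1]
  | (b+1) => bgen ((b:ℤ)+2) :: cword b ++ [bgen ((b:ℤ)+2)]

def Cp (b : ℕ) : Equiv.Perm ℤ := (cword b).prod

lemma cword_length (b : ℕ) : (cword b).length = 2*b + 1 := by
  induction b with
  | zero => rfl
  | succ b ih => simp [cword, ih]; omega

lemma cword_mem (b : ℕ) : ∀ x ∈ cword b, ∃ i : ℤ, 1 ≤ i ∧ i ≤ (b:ℤ) + 1 ∧ x = bgen i := by
  induction b with
  | zero =>
    intro x hx
    simp only [cword, List.mem_singleton] at hx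
    exact ⟨1, le_refl _, by omega, hx⟩
  | succ b ih =>
    intro x hx
    simp only [cword, List.cons_append, List.mem_cons, List.mem_append,
      List.mem_singleton] at hx
    rcases hx with rfl | hx' | rfl | h
    · exact ⟨(b:ℤ)+2, by omega, by push_cast; omega, rfl⟩
    · obtain ⟨i, h1, h2, h3⟩ := ih x hx'
      exact ⟨i, h1, by push_cast; omega, h3⟩
    · exact ⟨(b:ℤ)+2, by omega, by push_cast; omega, rfl⟩
    · simp at h

lemma Cp_succ (b : ℕ) : Cp (b+1) = bgen ((b:ℤ)+2) * Cp b * bgen ((b:ℤ)+2) := by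
  rw [Cp, cword, List.cons_append, List.prod_cons, List.prod_append, List.prod_singleton]
  rw [mul_assoc]
  rfl

lemma Cp_apply (b : ℕ) (x : ℤ) :
    Cp b x = if x = (b:ℤ)+1 then -((b:ℤ)+1) else if x = -((b:ℤ)+1) then (b:ℤ)+1 else x := by
  induction b generalizing x with
  | zero =>
    have : Cp 0 = bgen 1 := by rw [Cp, cword, List.prod_singleton]
    rw [this, bgen_apply_one]
    norm_num
  | succ b ih =>
    rw [Cp_succ]
    have e : (bgen ((b:ℤ)+2) * Cp b * bgen ((b:ℤ)+2)) x
        = bgen ((b:ℤ)+2) (Cp b (bgen ((b:ℤ)+2) x)) := rfl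
    have hb : ∀ y : ℤ, bgen ((b:ℤ)+2) y = if y = (b:ℤ)+1 then (b:ℤ)+2
        else if y = (b:ℤ)+2 then (b:ℤ)+1 else if y = -((b:ℤ)+1) then -((b:ℤ)+2)
        else if y = -((b:ℤ)+2) then -((b:ℤ)+1) else y := by
      intro y
      rw [bgen_apply _ _ (by omega)]
      have e1 : (b:ℤ)+2-1 = (b:ℤ)+1 := by ring
      rw [e1]
    have hc : ((b+1 : ℕ) : ℤ) = (b:ℤ) + 1 := by push_cast; ring
    rw [e, hc]
    rcases eq_or_ne x ((b:ℤ)+1) with rfl | c1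
    · rw [hb ((b:ℤ)+1), if_pos rfl]
      rw [ih ((b:ℤ)+2), if_neg (by omega), if_neg (by omega)]
      rw [hb ((b:ℤ)+2), if_neg (by omega), if_pos rfl]
      rw [if_neg (by omega), if_neg (by omega)]
    · rcases eq_or_ne x ((b:ℤ)+2) with rfl | c2
      · rw [hb ((b:ℤ)+2), if_neg (by omega), if_pos rfl]
        rw [ih ((b:ℤ)+1), if_pos rfl]
        rw [hb (-((b:ℤ)+1)), if_neg (by omega), if_neg (by omega), if_pos rfl]
        rw [if_pos (by omega)]
        omega
      · rcases eq_or_ne x (-((b:ℤ)+1)) with rfl | c3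
        · rw [hb (-((b:ℤ)+1)), if_neg (by omega), if_neg (by omega), if_pos rfl]
          rw [ih (-((b:ℤ)+2)), if_neg (by omega), if_neg (by omega)]
          rw [hb (-((b:ℤ)+2)), if_neg (by omega), if_neg (by omega), if_neg (by omega),
            if_pos rfl]
          rw [if_neg (by omega), if_neg (by omega)]
        · rcases eq_or_ne x (-((b:ℤ)+2)) with rfl | c4
          · rw [hb (-((b:ℤ)+2)), if_neg (by omega), if_neg (by omega), if_neg (by omega),
              if_pos rfl]
            rw [ih (-((b:ℤ)+1)), if_neg (by omega), if_pos rfl]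
            rw [hb ((b:ℤ)+1), if_pos rfl]
            rw [if_neg (by omega), if_pos (by omega)]
            omega
          · rw [hb x, if_neg c1, if_neg c2, if_neg c3, if_neg c4]
            rw [ih x, if_neg c1, if_neg c3]
            rw [hb x, if_neg c1, if_neg c2, if_neg c3, if_neg c4]
            rw [if_neg (by omega), if_neg (by omega)]

lemma Cp_sp (n : ℕ) (b : ℕ) (hb : (b:ℤ) + 1 ≤ (n:ℤ)) : IsSignedPerm n (Cp b) := by
  induction b with
  | zero =>
    have : Cp 0 = bgen 1 := by rw [Cp, cword, List.prod_singleton]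
    rw [this]; exact sp_bgen (by omega) (by omega)
  | succ b ih =>
    rw [Cp_succ]
    push_cast at hb
    exact sp_mul (sp_mul (sp_bgen (by omega) (by omega)) (ih (by omega)))
      (sp_bgen (by omega) (by omega))

def Wp (b : ℕ) (c : ℕ) : Equiv.Perm ℤ := Cp b * Vp ((b:ℤ)+1) c

lemma Wp_apply (b : ℕ) (c : ℕ) (x : ℤ) (hx : 0 ≤ x) :
    Wp b c x = if (b:ℤ)+1 ≤ x ∧ x < (b:ℤ)+1+c then x + 1
      else if x = (b:ℤ)+1+c then -((b:ℤ)+1) else x := by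
  have e : Wp b c x = Cp b (Vp ((b:ℤ)+1) c x) := rfl
  rw [e, Vp_apply _ _ (by omega) x hx, Cp_apply]
  split_ifs <;> omega

lemma Wp_sp (n : ℕ) (b : ℕ) (c : ℕ) (hbc : (b:ℤ)+1+c ≤ (n:ℤ)) : IsSignedPerm n (Wp b c) := by
  exact sp_mul (Cp_sp n b (by omega)) (Vp_sp n ((b:ℤ)+1) c (by omega) (by omega))

lemma count_big (n : ℕ) (σ : Equiv.Perm ℤ) (hsp : IsSignedPerm n σ) (a : ℤ) (ha1 : 1 ≤ a)
    (hout : σ (n:ℤ) = a ∨ σ (n:ℤ) = -a) :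
    ((n:ℤ) - a).toNat ≤ ((Finset.Icc (1:ℤ) ((n:ℤ)-1)).filter (fun k => a < |σ k|)).card := by
  classical
  have hsplit := Finset.card_filter_add_card_filter_not
    (s := Finset.Icc (1:ℤ) ((n:ℤ)-1)) (p := fun k => a < |σ k|)
  have hIcc : (Finset.Icc (1:ℤ) ((n:ℤ)-1)).card = ((n:ℤ) - 1).toNat := by
    rw [Int.card_Icc]; congr 1; ring
  have hcompl : ((Finset.Icc (1:ℤ) ((n:ℤ)-1)).filter (fun k => ¬ a < |σ k|)).card
      ≤ (a - 1).toNat := by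
    have := Finset.card_le_card_of_injOn (f := fun k => |σ k|)
      (s := (Finset.Icc (1:ℤ) ((n:ℤ)-1)).filter (fun k => ¬ a < |σ k|))
      (t := Finset.Icc (1:ℤ) (a-1)) ?_ ?_
    · rwa [Int.card_Icc, show a - 1 + 1 - 1 = a - 1 by ring] at this
    · intro k hk
      rw [Finset.mem_coe, Finset.mem_filter] at hk
      simp only [Finset.mem_filter, Finset.mem_Icc, not_lt] at hk
      obtain ⟨⟨hk1, hk2⟩, hk3⟩ := hk
      simp only [Finset.mem_coe, Finset.mem_Icc]
      have h0 : σ k ≠ 0 := sp_ne_zero hsp (by omega)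
      have hne : |σ k| ≠ a := by
        intro hc
        have : σ k = a ∨ σ k = -a := by
          rcases abs_cases (σ k) with ⟨e, _⟩ | ⟨e, _⟩ <;> omega
        rcases this with hc2 | hc2
        · rcases hout with h | h
          · have : k = (n:ℤ) := σ.injective (hc2.trans h.symm)
            omega
          · have hmn : σ (-(n:ℤ)) = a := by rw [hsp.1, h]; ring
            have : k = -(n:ℤ) := σ.injective (hc2.trans hmn.symm)
            omega
        · rcases hout with h | h
          · have hmn : σ (-(n:ℤ)) = -a := by rw [hsp.1, h]
            have : k = -(n:ℤ) := σ.injective (hc2.trans hmn.symm)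
            omega
          · have : k = (n:ℤ) := σ.injective (hc2.trans h.symm)
            omega
      rcases abs_cases (σ k) with ⟨e, _⟩ | ⟨e, _⟩ <;> omega
    · intro x hx y hy hxy
      simp only [Finset.mem_coe, Finset.mem_filter, Finset.mem_Icc] at hx hy
      simp only at hxy
      have : σ x = σ y ∨ σ x = -σ y := by
        rcases abs_cases (σ x) with ⟨e1, _⟩ | ⟨e1, _⟩ <;>
          rcases abs_cases (σ y) with ⟨e2, _⟩ | ⟨e2, _⟩ <;> omega
      rcases this with h | h
      · exact σ.injective h
      · have h2 : σ x = σ (-y) := by rw [hsp.1]; omega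
        have := σ.injective h2
        omega
  omega

lemma count_small (n : ℕ) (σ : Equiv.Perm ℤ) (hsp : IsSignedPerm n σ) (a : ℤ) (ha1 : 1 ≤ a)
    (han : a ≤ (n:ℤ)) (hout : σ (n:ℤ) = a ∨ σ (n:ℤ) = -a) :
    (a - 1).toNat ≤ ((Finset.Icc (1:ℤ) ((n:ℤ)-1)).filter (fun k => |σ k| < a)).card := by
  classical
  have hinv : IsSignedPerm n σ⁻¹ := sp_inv hsp
  have := Finset.card_le_card_of_injOn (f := fun j => |σ⁻¹ j|)
    (s := Finset.Icc (1:ℤ) (a-1))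
    (t := (Finset.Icc (1:ℤ) ((n:ℤ)-1)).filter (fun k => |σ k| < a)) ?_ ?_
  · rwa [Int.card_Icc, show a - 1 + 1 - 1 = a - 1 by ring] at this
  · intro j hj
    simp only [Finset.mem_coe, Finset.mem_Icc] at hj
    have h0 : σ⁻¹ j ≠ 0 := sp_ne_zero hinv (by omega)
    have habs : |σ⁻¹ j| ≤ (n:ℤ) := sp_abs_le hinv (by rw [abs_of_nonneg (by omega)]; omega)
    have hnen : σ⁻¹ j ≠ (n:ℤ) := by
      intro hc
      have : σ (n:ℤ) = j := by rw [← hc]; simp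
      omega
    have hnen2 : σ⁻¹ j ≠ -(n:ℤ) := by
      intro hc
      have h2 : σ (-(n:ℤ)) = j := by rw [← hc]; simp
      rw [hsp.1] at h2
      omega
    have hval : |σ (|σ⁻¹ j|)| = j := by
      rcases le_or_gt 0 (σ⁻¹ j) with h | h
      · rw [abs_of_nonneg h]
        simp only [show ∀ x, σ (σ⁻¹ x) = x from σ.apply_symm_apply]
        rw [abs_of_nonneg (by omega)]
      · rw [abs_of_neg h, show -σ⁻¹ j = -(σ⁻¹ j) from rfl, hsp.1]
        simp only [show ∀ x, σ (σ⁻¹ x) = x from σ.apply_symm_apply]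
        rw [abs_neg, abs_of_nonneg (by omega)]
    rw [Finset.mem_coe, Finset.mem_filter]
    simp only [Finset.mem_filter, Finset.mem_Icc]
    refine ⟨⟨?_, ?_⟩, ?_⟩
    · rcases abs_cases (σ⁻¹ j) with ⟨e, _⟩ | ⟨e, _⟩ <;> omega
    · rcases abs_cases (σ⁻¹ j) with ⟨e, _⟩ | ⟨e, _⟩ <;> omega
    · omega
  · intro x hx y hy hxy
    simp only [Finset.mem_coe, Finset.mem_Icc] at hx hy
    simp only at hxy
    have : σ⁻¹ x = σ⁻¹ y ∨ σ⁻¹ x = -σ⁻¹ y := by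
      rcases abs_cases (σ⁻¹ x) with ⟨e1, _⟩ | ⟨e1, _⟩ <;>
        rcases abs_cases (σ⁻¹ y) with ⟨e2, _⟩ | ⟨e2, _⟩ <;> omega
    rcases this with h | h
    · exact σ⁻¹.injective h
    · have h2 : σ⁻¹ x = σ⁻¹ (-y) := by rw [show σ⁻¹ (-y) = -σ⁻¹ y from hinv.1 y]; omega
      have := σ⁻¹.injective h2
      omega

lemma inv_lb_pos_core (n : ℕ) (hn : 1 ≤ n) (σ : Equiv.Perm ℤ) (hsp : IsSignedPerm n σ)
    (a : ℤ) (ha1 : 1 ≤ a) (han : a ≤ (n:ℤ)) (hσn : σ (n:ℤ) = a) :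
    ∃ T : Finset (ℤ × ℤ),
      T ⊆ (((Finset.Icc (-(n : ℤ)) (n : ℤ)) ×ˢ (Finset.Icc (-(n : ℤ)) (n : ℤ))).filter
        (fun p => p.1 ≠ 0 ∧ p.2 ≠ 0 ∧ p.1 < p.2 ∧ σ p.2 < σ p.1)) ∧
      2 * ((n:ℤ) - a).toNat ≤ T.card ∧
      ∀ p ∈ T, p.1 = -(n:ℤ) ∨ p.2 = (n:ℤ) := by
  classical
  set s := (Finset.Icc (1:ℤ) ((n:ℤ)-1)).filter (fun k => a < |σ k|) with hs
  set G : ℤ × ℤ → ℤ × ℤ := fun ke =>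
    if 0 < σ ke.1 then (if ke.2 = 0 then (ke.1, (n:ℤ)) else (-(n:ℤ), -ke.1))
    else (if ke.2 = 0 then (-(n:ℤ), ke.1) else (-ke.1, (n:ℤ))) with hG
  have hinj : Set.InjOn G ↑(s ×ˢ ({0,1} : Finset ℤ)) := by
    rintro ⟨k, e⟩ hp ⟨k', e'⟩ hq h
    simp only [Finset.mem_coe, Finset.mem_product, hs, Finset.mem_filter, Finset.mem_Icc,
      Finset.mem_insert, Finset.mem_singleton] at hp hq
    simp only [hG] at h
    rw [Prod.mk.injEq]
    split_ifs at h <;> rw [Prod.mk.injEq] at h <;>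
      obtain ⟨h1, h2⟩ := h <;> constructor <;> omega
  have hmaps : ∀ p ∈ s ×ˢ ({0,1} : Finset ℤ),
      G p ∈ (((Finset.Icc (-(n : ℤ)) (n : ℤ)) ×ˢ (Finset.Icc (-(n : ℤ)) (n : ℤ))).filter
        (fun p => p.1 ≠ 0 ∧ p.2 ≠ 0 ∧ p.1 < p.2 ∧ σ p.2 < σ p.1)) := by
    rintro ⟨k, e⟩ hp
    simp only [Finset.mem_product, hs, Finset.mem_filter, Finset.mem_Icc,
      Finset.mem_insert, Finset.mem_singleton] at hp
    obtain ⟨⟨⟨hk1, hk2⟩, hk3⟩, he⟩ := hp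
    have hmk := hsp.1 k
    have hmn := hsp.1 (n:ℤ)
    rw [hσn] at hmn
    have habs : σ k = |σ k| ∨ σ k = -|σ k| := by
      rcases abs_cases (σ k) with ⟨e1, _⟩ | ⟨e1, _⟩ <;> omega
    simp only [hG]
    split_ifs with hsg hee hee <;>
      simp only [Finset.mem_filter, Finset.mem_product, Finset.mem_Icc] <;>
      refine ⟨⟨⟨by omega, by omega⟩, by omega, by omega⟩, by omega, by omega, by omega, ?_⟩
    · rw [hσn]; omega
    · rw [hmk, hmn]; omega
    · rw [hmn]; omega
    · rw [hσn, hmk]; omega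
  refine ⟨(s ×ˢ ({0,1} : Finset ℤ)).image G, ?_, ?_, ?_⟩
  · intro p hp
    obtain ⟨q, hq, rfl⟩ := Finset.mem_image.mp hp
    exact hmaps q hq
  · rw [Finset.card_image_of_injOn hinj, Finset.card_product]
    have hcb := count_big n σ hsp a ha1 (Or.inl hσn)
    rw [← hs] at hcb
    have h2 : ({0,1} : Finset ℤ).card = 2 := rfl
    rw [h2]
    omega
  · intro p hp
    obtain ⟨⟨k, e⟩, hq, rfl⟩ := Finset.mem_image.mp hp
    simp only [hG]
    split_ifs <;> simp

lemma inv_lb_pos (n : ℕ) (hn : 1 ≤ n) (σ : Equiv.Perm ℤ) (hsp : IsSignedPerm n σ)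
    (a : ℤ) (ha1 : 1 ≤ a) (han : a ≤ (n:ℤ)) (hσn : σ (n:ℤ) = a) :
    2 * ((n:ℤ) - a).toNat ≤ invCount n σ := by
  obtain ⟨T, hT1, hT2, _⟩ := inv_lb_pos_core n hn σ hsp a ha1 han hσn
  exact le_trans hT2 (Finset.card_le_card hT1)

lemma inv_lb_pos_desc (n : ℕ) (hn : 1 ≤ n) (σ : Equiv.Perm ℤ) (hsp : IsSignedPerm n σ)
    (a : ℤ) (ha1 : 1 ≤ a) (han : a ≤ (n:ℤ)) (hσn : σ (n:ℤ) = a)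
    (i : ℤ) (hi1 : 1 ≤ i) (hi2 : i + 1 ≤ (n:ℤ) - 1) (hd : σ (i+1) < σ i) :
    2 * ((n:ℤ) - a).toNat + 1 ≤ invCount n σ := by
  classical
  obtain ⟨T, hT1, hT2, hT3⟩ := inv_lb_pos_core n hn σ hsp a ha1 han hσn
  have hnm : (i, i+1) ∉ T := by
    intro hc
    rcases hT3 _ hc with h | h <;> simp only at h <;> omega
  have hsub : insert (i, i+1) T ⊆ (((Finset.Icc (-(n : ℤ)) (n : ℤ)) ×ˢ
      (Finset.Icc (-(n : ℤ)) (n : ℤ))).filter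
      (fun p => p.1 ≠ 0 ∧ p.2 ≠ 0 ∧ p.1 < p.2 ∧ σ p.2 < σ p.1)) := by
    intro p hp
    rcases Finset.mem_insert.mp hp with rfl | hp'
    · simp only [Finset.mem_filter, Finset.mem_product, Finset.mem_Icc]
      refine ⟨⟨⟨by omega, by omega⟩, by omega, by omega⟩, by omega, by omega, by omega, hd⟩
    · exact hT1 hp'
  have hcc := Finset.card_le_card hsub
  rw [Finset.card_insert_of_notMem hnm] at hcc
  rw [show invCount n σ = (((Finset.Icc (-(n : ℤ)) (n : ℤ)) ×ˢ
    (Finset.Icc (-(n : ℤ)) (n : ℤ))).filter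
    (fun p => p.1 ≠ 0 ∧ p.2 ≠ 0 ∧ p.1 < p.2 ∧ σ p.2 < σ p.1)).card from rfl]
  omega

lemma neg_lb1 (n : ℕ) (hn : 1 ≤ n) (σ : Equiv.Perm ℤ) (hσn : σ (n:ℤ) < 0) :
    1 ≤ negCount n σ := by
  have : (n:ℤ) ∈ (Finset.Icc (1 : ℤ) (n : ℤ)).filter (fun i => σ i < 0) := by
    simp only [Finset.mem_filter, Finset.mem_Icc]
    exact ⟨⟨by omega, le_refl _⟩, hσn⟩
  exact Finset.card_pos.mpr ⟨_, this⟩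

lemma neg_lb2 (n : ℕ) (hn : 1 ≤ n) (σ : Equiv.Perm ℤ) (hσn : σ (n:ℤ) < 0)
    (j : ℤ) (hj1 : 1 ≤ j) (hj2 : j ≤ (n:ℤ) - 1) (hσj : σ j < 0) :
    2 ≤ negCount n σ := by
  classical
  have hsub : ({j, (n:ℤ)} : Finset ℤ) ⊆ (Finset.Icc (1 : ℤ) (n : ℤ)).filter
      (fun i => σ i < 0) := by
    intro x hx
    simp only [Finset.mem_insert, Finset.mem_singleton] at hx
    simp only [Finset.mem_filter, Finset.mem_Icc]
    rcases hx with rfl | rfl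
    · exact ⟨⟨hj1, by omega⟩, hσj⟩
    · exact ⟨⟨by omega, le_refl _⟩, hσn⟩
  have hcard2 : ({j, (n:ℤ)} : Finset ℤ).card = 2 := Finset.card_pair (by omega)
  have := Finset.card_le_card hsub
  rw [hcard2] at this
  exact this

lemma inv_lb_neg_core (n : ℕ) (hn : 1 ≤ n) (σ : Equiv.Perm ℤ) (hsp : IsSignedPerm n σ)
    (a : ℤ) (ha1 : 1 ≤ a) (han : a ≤ (n:ℤ)) (hσn : σ (n:ℤ) = -a) :
    ∃ T : Finset (ℤ × ℤ),
      T ⊆ (((Finset.Icc (-(n : ℤ)) (n : ℤ)) ×ˢ (Finset.Icc (-(n : ℤ)) (n : ℤ))).filter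
        (fun p => p.1 ≠ 0 ∧ p.2 ≠ 0 ∧ p.1 < p.2 ∧ σ p.2 < σ p.1)) ∧
      2 * ((n:ℤ) - 1).toNat + 2 * (a - 1).toNat + 1 ≤ T.card ∧
      ∀ p ∈ T, p.1 = -(n:ℤ) ∨ p.2 = (n:ℤ) := by
  classical
  set I := Finset.Icc (1:ℤ) ((n:ℤ)-1) with hI
  set sp := I.filter (fun k => 0 < σ k) with hsp'
  set sm := I.filter (fun k => σ k < 0) with hsm
  set tp := sp.filter (fun k => |σ k| < a) with htp
  set tm := sm.filter (fun k => |σ k| < a) with htm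
  set S : Finset (ℤ × ℤ) := (sp ×ˢ ({0,1} : Finset ℤ)) ∪ (sm ×ˢ ({2,3} : Finset ℤ))
    ∪ ((tp ×ˢ ({2,3} : Finset ℤ)) ∪ (tm ×ˢ ({0,1} : Finset ℤ)))
    ∪ {((0:ℤ), (4:ℤ))} with hS
  set G : ℤ × ℤ → ℤ × ℤ := fun ke =>
    if ke.2 = 0 then (ke.1, (n:ℤ)) else if ke.2 = 1 then (-(n:ℤ), -ke.1)
    else if ke.2 = 2 then (-(n:ℤ), ke.1) else if ke.2 = 3 then (-ke.1, (n:ℤ))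
    else (-(n:ℤ), (n:ℤ)) with hG
  have hmemS : ∀ p : ℤ × ℤ, p ∈ S →
      (p = (0, 4) ∨ (1 ≤ p.1 ∧ p.1 ≤ (n:ℤ) - 1 ∧ 0 ≤ p.2 ∧ p.2 ≤ 3)) := by
    intro p hp
    simp only [hS, Finset.mem_union, Finset.mem_product, Finset.mem_singleton,
      htp, htm, hsp', hsm, hI, Finset.mem_filter, Finset.mem_Icc,
      Finset.mem_insert] at hp
    rcases hp with ((h | h) | (h | h)) | h
    · right; omega
    · right; omega
    · right; omega
    · right; omega
    · left; exact h
  have hinj : Set.InjOn G ↑S := by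
    rintro ⟨k, e⟩ hp ⟨k', e'⟩ hq h
    have h1 := hmemS _ (Finset.mem_coe.mp hp)
    have h2 := hmemS _ (Finset.mem_coe.mp hq)
    simp only [Prod.mk.injEq] at h1 h2
    simp only [hG] at h
    rw [Prod.mk.injEq]
    split_ifs at h <;> rw [Prod.mk.injEq] at h <;> obtain ⟨e1, e2⟩ := h <;>
      constructor <;> omega
  have hg0 : ∀ k : ℤ, G (k, (0:ℤ)) = (k, (n:ℤ)) := fun k => by simp [hG]
  have hg1 : ∀ k : ℤ, G (k, (1:ℤ)) = (-(n:ℤ), -k) := fun k => by norm_num [hG]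
  have hg2 : ∀ k : ℤ, G (k, (2:ℤ)) = (-(n:ℤ), k) := fun k => by norm_num [hG]
  have hg3 : ∀ k : ℤ, G (k, (3:ℤ)) = (-k, (n:ℤ)) := fun k => by norm_num [hG]
  have hg4 : G ((0:ℤ), (4:ℤ)) = (-(n:ℤ), (n:ℤ)) := by norm_num [hG]
  have hmaps : ∀ p ∈ S,
      G p ∈ (((Finset.Icc (-(n : ℤ)) (n : ℤ)) ×ˢ (Finset.Icc (-(n : ℤ)) (n : ℤ))).filter
        (fun p => p.1 ≠ 0 ∧ p.2 ≠ 0 ∧ p.1 < p.2 ∧ σ p.2 < σ p.1)) := by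
    rintro ⟨k, e⟩ hp
    simp only [hS, Finset.mem_union, Finset.mem_product, Finset.mem_singleton,
      htp, htm, hsp', hsm, hI, Finset.mem_filter, Finset.mem_Icc,
      Finset.mem_insert, Prod.mk.injEq] at hp
    have hmk := hsp.1 k
    have hmn : σ (-(n:ℤ)) = a := by rw [hsp.1, hσn]; ring
    rcases hp with ((⟨⟨⟨hk1, hk2⟩, hk3⟩, he⟩ | ⟨⟨⟨hk1, hk2⟩, hk3⟩, he⟩)
      | (⟨⟨⟨⟨hk1, hk2⟩, hk3⟩, hk4⟩, he⟩ | ⟨⟨⟨⟨hk1, hk2⟩, hk3⟩, hk4⟩, he⟩)) | ⟨he1, he2⟩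
    · rcases he with rfl | rfl
      · rw [hg0]
        simp only [Finset.mem_filter, Finset.mem_product, Finset.mem_Icc]
        refine ⟨⟨⟨by omega, by omega⟩, by omega, by omega⟩, by omega, by omega, by omega, ?_⟩
        show σ (n:ℤ) < σ k
        rw [hσn]; omega
      · rw [hg1]
        simp only [Finset.mem_filter, Finset.mem_product, Finset.mem_Icc]
        refine ⟨⟨⟨by omega, by omega⟩, by omega, by omega⟩, by omega, by omega, by omega, ?_⟩
        show σ (-k) < σ (-(n:ℤ))
        rw [hmk, hmn]; omega
    · rcases he with rfl | rfl
      · rw [hg2]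
        simp only [Finset.mem_filter, Finset.mem_product, Finset.mem_Icc]
        refine ⟨⟨⟨by omega, by omega⟩, by omega, by omega⟩, by omega, by omega, by omega, ?_⟩
        show σ k < σ (-(n:ℤ))
        rw [hmn]; omega
      · rw [hg3]
        simp only [Finset.mem_filter, Finset.mem_product, Finset.mem_Icc]
        refine ⟨⟨⟨by omega, by omega⟩, by omega, by omega⟩, by omega, by omega, by omega, ?_⟩
        show σ (n:ℤ) < σ (-k)
        rw [hσn, hmk]; omega
    · have habs : |σ k| = σ k := abs_of_pos hk3
      rcases he with rfl | rfl
      · rw [hg2]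
        simp only [Finset.mem_filter, Finset.mem_product, Finset.mem_Icc]
        refine ⟨⟨⟨by omega, by omega⟩, by omega, by omega⟩, by omega, by omega, by omega, ?_⟩
        show σ k < σ (-(n:ℤ))
        rw [hmn]; omega
      · rw [hg3]
        simp only [Finset.mem_filter, Finset.mem_product, Finset.mem_Icc]
        refine ⟨⟨⟨by omega, by omega⟩, by omega, by omega⟩, by omega, by omega, by omega, ?_⟩
        show σ (n:ℤ) < σ (-k)
        rw [hσn, hmk]; omega
    · have habs : |σ k| = -σ k := abs_of_neg hk3
      rcases he with rfl | rfl
      · rw [hg0]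
        simp only [Finset.mem_filter, Finset.mem_product, Finset.mem_Icc]
        refine ⟨⟨⟨by omega, by omega⟩, by omega, by omega⟩, by omega, by omega, by omega, ?_⟩
        show σ (n:ℤ) < σ k
        rw [hσn]; omega
      · rw [hg1]
        simp only [Finset.mem_filter, Finset.mem_product, Finset.mem_Icc]
        refine ⟨⟨⟨by omega, by omega⟩, by omega, by omega⟩, by omega, by omega, by omega, ?_⟩
        show σ (-k) < σ (-(n:ℤ))
        rw [hmk, hmn]; omega
    · subst he1; subst he2
      rw [hg4]
      simp only [Finset.mem_filter, Finset.mem_product, Finset.mem_Icc]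
      refine ⟨⟨⟨by omega, by omega⟩, by omega, by omega⟩, by omega, by omega, by omega, ?_⟩
      show σ (n:ℤ) < σ (-(n:ℤ))
      rw [hσn, hmn]; omega
  have hcard : 2 * ((n:ℤ) - 1).toNat + 2 * (a - 1).toNat + 1 ≤ S.card := by
    have d1 : Disjoint (sp ×ˢ ({0,1} : Finset ℤ)) (sm ×ˢ ({2,3} : Finset ℤ)) := by
      rw [Finset.disjoint_left]
      rintro ⟨k, e⟩ h1 h2
      simp only [Finset.mem_product, Finset.mem_insert, Finset.mem_singleton] at h1 h2
      omega
    have d2 : Disjoint (tp ×ˢ ({2,3} : Finset ℤ)) (tm ×ˢ ({0,1} : Finset ℤ)) := by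
      rw [Finset.disjoint_left]
      rintro ⟨k, e⟩ h1 h2
      simp only [Finset.mem_product, Finset.mem_insert, Finset.mem_singleton] at h1 h2
      omega
    have d3 : Disjoint ((sp ×ˢ ({0,1} : Finset ℤ)) ∪ (sm ×ˢ ({2,3} : Finset ℤ)))
        ((tp ×ˢ ({2,3} : Finset ℤ)) ∪ (tm ×ˢ ({0,1} : Finset ℤ))) := by
      rw [Finset.disjoint_left]
      rintro ⟨k, e⟩ h1 h2
      simp only [Finset.mem_union, Finset.mem_product, Finset.mem_insert,
        Finset.mem_singleton, htp, htm, hsp', hsm, Finset.mem_filter] at h1 h2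
      rcases h1 with ⟨hk, he⟩ | ⟨hk, he⟩ <;> rcases h2 with ⟨⟨hk', _⟩, he'⟩ | ⟨⟨hk', _⟩, he'⟩
      · omega
      · exact absurd hk'.2 (by omega)
      · exact absurd hk'.2 (by omega)
      · omega
    have d4 : Disjoint ((sp ×ˢ ({0,1} : Finset ℤ)) ∪ (sm ×ˢ ({2,3} : Finset ℤ))
        ∪ ((tp ×ˢ ({2,3} : Finset ℤ)) ∪ (tm ×ˢ ({0,1} : Finset ℤ))))
        ({((0:ℤ), (4:ℤ))} : Finset (ℤ × ℤ)) := by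
      rw [Finset.disjoint_right]
      rintro ⟨k, e⟩ h1 h2
      simp only [Finset.mem_singleton, Prod.mk.injEq] at h1
      obtain ⟨rfl, rfl⟩ := h1
      simp only [Finset.mem_union, Finset.mem_product, Finset.mem_insert,
        Finset.mem_singleton, htp, htm, hsp', hsm, Finset.mem_filter] at h2
      rcases h2 with (⟨_, he⟩ | ⟨_, he⟩) | (⟨_, he⟩ | ⟨_, he⟩) <;> omega
    have hsplit1 : sp.card + sm.card = ((n:ℤ) - 1).toNat := by
      have h0 := Finset.card_filter_add_card_filter_not
        (s := I) (p := fun k => 0 < σ k)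
      have he : I.filter (fun k => ¬ 0 < σ k) = I.filter (fun k => σ k < 0) := by
        apply Finset.filter_congr
        intro k hk
        simp only [hI, Finset.mem_Icc] at hk
        have := sp_ne_zero hsp (k := k) (by omega)
        constructor
        · intro h; omega
        · intro h; omega
      rw [he] at h0
      have hIc : I.card = ((n:ℤ) - 1).toNat := by
        rw [hI, Int.card_Icc]; congr 1; ring
      rw [← hsp', ← hsm, hIc] at h0
      exact h0
    have hsplit2 : (a - 1).toNat ≤ tp.card + tm.card := by
      have h0 := Finset.card_filter_add_card_filter_not
        (s := I.filter (fun k => |σ k| < a)) (p := fun k => 0 < σ k)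
      have he1 : (I.filter (fun k => |σ k| < a)).filter (fun k => 0 < σ k) = tp := by
        rw [htp, hsp', Finset.filter_filter, Finset.filter_filter]
        apply Finset.filter_congr
        intro k _
        constructor <;> intro h <;> exact ⟨h.2, h.1⟩
      have he2 : (I.filter (fun k => |σ k| < a)).filter (fun k => ¬ 0 < σ k) = tm := by
        rw [htm, hsm, Finset.filter_filter, Finset.filter_filter]
        apply Finset.filter_congr
        intro k hk
        simp only [hI, Finset.mem_Icc] at hk
        have := sp_ne_zero hsp (k := k) (by omega)
        constructor
        · intro h; exact ⟨by omega, h.1⟩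
        · intro h; exact ⟨h.2, by omega⟩
      rw [he1, he2] at h0
      have := count_small n σ hsp a ha1 han (Or.inr hσn)
      rw [← hI] at this
      omega
    rw [hS, Finset.card_union_of_disjoint d4, Finset.card_union_of_disjoint d3,
      Finset.card_union_of_disjoint d1, Finset.card_union_of_disjoint d2]
    simp only [Finset.card_product, Finset.card_singleton]
    have hc2 : ({0,1} : Finset ℤ).card = 2 := rfl
    have hc3 : ({2,3} : Finset ℤ).card = 2 := rfl
    rw [hc2, hc3]
    omega
  refine ⟨S.image G, ?_, ?_, ?_⟩
  · intro p hp
    obtain ⟨q, hq, rfl⟩ := Finset.mem_image.mp hp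
    exact hmaps q hq
  · rw [Finset.card_image_of_injOn hinj]
    exact hcard
  · intro p hp
    obtain ⟨⟨k, e⟩, hq, rfl⟩ := Finset.mem_image.mp hp
    simp only [hG]
    split_ifs <;> simp

lemma inv_lb_neg (n : ℕ) (hn : 1 ≤ n) (σ : Equiv.Perm ℤ) (hsp : IsSignedPerm n σ)
    (a : ℤ) (ha1 : 1 ≤ a) (han : a ≤ (n:ℤ)) (hσn : σ (n:ℤ) = -a) :
    2 * ((n:ℤ) - 1).toNat + 2 * (a - 1).toNat + 1 ≤ invCount n σ := by
  obtain ⟨T, hT1, hT2, _⟩ := inv_lb_neg_core n hn σ hsp a ha1 han hσn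
  exact le_trans hT2 (Finset.card_le_card hT1)

lemma inv_lb_neg_desc (n : ℕ) (hn : 1 ≤ n) (σ : Equiv.Perm ℤ) (hsp : IsSignedPerm n σ)
    (a : ℤ) (ha1 : 1 ≤ a) (han : a ≤ (n:ℤ)) (hσn : σ (n:ℤ) = -a)
    (i : ℤ) (hi1 : 1 ≤ i) (hi2 : i + 1 ≤ (n:ℤ) - 1) (hd : σ (i+1) < σ i) :
    2 * ((n:ℤ) - 1).toNat + 2 * (a - 1).toNat + 2 ≤ invCount n σ := by
  classical
  obtain ⟨T, hT1, hT2, hT3⟩ := inv_lb_neg_core n hn σ hsp a ha1 han hσn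
  have hnm : (i, i+1) ∉ T := by
    intro hc
    rcases hT3 _ hc with h | h <;> simp only at h <;> omega
  have hsub : insert (i, i+1) T ⊆ (((Finset.Icc (-(n : ℤ)) (n : ℤ)) ×ˢ
      (Finset.Icc (-(n : ℤ)) (n : ℤ))).filter
      (fun p => p.1 ≠ 0 ∧ p.2 ≠ 0 ∧ p.1 < p.2 ∧ σ p.2 < σ p.1)) := by
    intro p hp
    rcases Finset.mem_insert.mp hp with rfl | hp'
    · simp only [Finset.mem_filter, Finset.mem_product, Finset.mem_Icc]
      refine ⟨⟨⟨by omega, by omega⟩, by omega, by omega⟩, by omega, by omega, by omega, hd⟩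
    · exact hT1 hp'
  have hcc := Finset.card_le_card hsub
  rw [Finset.card_insert_of_notMem hnm] at hcc
  rw [show invCount n σ = (((Finset.Icc (-(n : ℤ)) (n : ℤ)) ×ˢ
    (Finset.Icc (-(n : ℤ)) (n : ℤ))).filter
    (fun p => p.1 ≠ 0 ∧ p.2 ≠ 0 ∧ p.1 < p.2 ∧ σ p.2 < σ p.1)).card from rfl]
  omega

lemma classify (n : ℕ) (hn : 1 ≤ n) (σ : Equiv.Perm ℤ) (hsp : IsSignedPerm n σ)
    (a : ℤ) (ha1 : 1 ≤ a) (han : a ≤ (n:ℤ))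
    (hpos : ∀ k : ℤ, 1 ≤ k → k ≤ (n:ℤ) - 1 → 0 < σ k)
    (hmono : ∀ i : ℤ, 1 ≤ i → i ≤ (n:ℤ) - 2 → σ i < σ (i+1))
    (hna : σ (n:ℤ) = a ∨ σ (n:ℤ) = -a) :
    ∀ k : ℤ, 1 ≤ k → k ≤ (n:ℤ) - 1 → σ k = if k < a then k else k + 1 := by
  intro k hk1 hk2
  have hn2 : 2 ≤ (n:ℤ) := by omega
  have hlb : ∀ j : ℤ, 1 ≤ j → j ≤ (n:ℤ) - 1 → j ≤ σ j :=
    mono_lb σ ((n:ℤ)-1) (hpos 1 (by omega) (by omega))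
      (fun j h1 h2 => hmono j h1 (by omega))
  have hub0 : σ ((n:ℤ)-1) ≤ (n:ℤ) := by
    have h := sp_abs_le hsp (k := (n:ℤ)-1) (by rw [abs_of_nonneg (by omega)]; omega)
    rcases abs_cases (σ ((n:ℤ)-1)) with ⟨e,_⟩ | ⟨e,_⟩ <;> omega
  have hub : ∀ j : ℤ, 1 ≤ j → j ≤ (n:ℤ) - 1 → σ j ≤ j + 1 := by
    intro j h1 h2
    have := mono_ub σ ((n:ℤ)-1) (n:ℤ) hub0 (fun j h1 h2 => hmono j h1 (by omega)) j h1 h2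
    omega
  have hne : ∀ j : ℤ, 1 ≤ j → j ≤ (n:ℤ) - 1 → σ j ≠ a := by
    intro j h1 h2 hc
    rcases hna with h | h
    · have : j = (n:ℤ) := σ.injective (hc.trans h.symm)
      omega
    · have hmn : σ (-(n:ℤ)) = a := by rw [hsp.1, h]; ring
      have : j = -(n:ℤ) := σ.injective (hc.trans hmn.symm)
      omega
  have hdown : ∀ j : ℕ, 1 ≤ a - 1 - j → σ (a - 1 - j) = a - 1 - j := by
    intro j
    induction j with
    | zero =>
      intro hj
      simp only [Nat.cast_zero, sub_zero] at hj ⊢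
      have h1 := hlb (a-1) (by omega) (by omega)
      have h2 := hub (a-1) (by omega) (by omega)
      have h3 := hne (a-1) (by omega) (by omega)
      omega
    | succ j ih =>
      intro hj
      push_cast at hj ⊢
      have e1 : a - 1 - ((j:ℤ)+1) + 1 = a - 1 - j := by ring
      have h1 := hmono (a - 1 - ((j:ℤ)+1)) (by omega) (by omega)
      rw [e1] at h1
      rw [ih (by omega)] at h1
      have h2 := hlb (a - 1 - ((j:ℤ)+1)) (by omega) (by omega)
      omega
  have hupp : ∀ j : ℕ, a + j ≤ (n:ℤ) - 1 → σ (a + j) = a + j + 1 := by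
    intro j
    induction j with
    | zero =>
      intro hj
      simp only [Nat.cast_zero, add_zero] at hj ⊢
      have h1 := hlb a (by omega) (by omega)
      have h2 := hub a (by omega) (by omega)
      have h3 := hne a (by omega) (by omega)
      omega
    | succ j ih =>
      intro hj
      push_cast at hj ⊢
      have h1 := hmono (a + j) (by omega) (by omega)
      rw [ih (by omega)] at h1
      have h2 := hub (a + (j:ℤ) + 1) (by omega) (by omega)
      have e1 : a + ((j:ℤ)+1) = (a + j) + 1 := by ring
      rw [e1]
      omega
  rcases lt_or_ge k a with h | h
  · rw [if_pos h]
    have := hdown (a - 1 - k).toNat (by omega)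
    rw [show a - 1 - ((a - 1 - k).toNat : ℤ) = k by omega] at this
    exact this
  · rw [if_neg (by omega)]
    have := hupp (k - a).toNat (by omega)
    rw [show a + ((k - a).toNat : ℤ) = k by omega] at this
    omega

lemma eq_Vp (n : ℕ) (hn : 1 ≤ n) (σ : Equiv.Perm ℤ) (hsp : IsSignedPerm n σ)
    (a : ℤ) (ha1 : 1 ≤ a) (han : a ≤ (n:ℤ)) (hσn : σ (n:ℤ) = a)
    (hF : invCount n σ + negCount n σ ≤ 2 * ((n:ℤ) - a).toNat) :
    σ = Vp a ((n:ℤ) - a).toNat := by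
  have hpos : ∀ k : ℤ, 1 ≤ k → k ≤ (n:ℤ) - 1 → 0 < σ k := by
    intro k h1 h2
    have hnz := sp_ne_zero hsp (k := k) (by omega)
    by_contra hc
    push_neg at hc
    have hneg : σ k < 0 := by omega
    have h3 := inv_lb_pos n hn σ hsp a ha1 han hσn
    have h4 : 1 ≤ negCount n σ := by
      have : k ∈ (Finset.Icc (1 : ℤ) (n : ℤ)).filter (fun i => σ i < 0) := by
        simp only [Finset.mem_filter, Finset.mem_Icc]
        exact ⟨⟨h1, by omega⟩, hneg⟩
      exact Finset.card_pos.mpr ⟨_, this⟩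
    omega
  have hmono : ∀ i : ℤ, 1 ≤ i → i ≤ (n:ℤ) - 2 → σ i < σ (i+1) := by
    intro i h1 h2
    have hnei : σ i ≠ σ (i+1) := fun h => by
      have := σ.injective h; omega
    by_contra hc
    push_neg at hc
    have h3 := inv_lb_pos_desc n hn σ hsp a ha1 han hσn i h1 (by omega) (by omega)
    omega
  have hcl := classify n hn σ hsp a ha1 han hpos hmono (Or.inl hσn)
  have hcast : (((n:ℤ) - a).toNat : ℤ) = (n:ℤ) - a := by omega
  apply sp_ext hsp (Vp_sp n a _ ha1 (by rw [hcast]; omega))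
  intro x hx
  rw [Vp_apply a _ ha1 x hx, hcast]
  rcases eq_or_ne x 0 with rfl | hx0
  · rw [sp_zero hsp, if_neg (by omega), if_neg (by omega)]
  · rcases lt_trichotomy x (n:ℤ) with h | h | h
    · have := hcl x (by omega) (by omega)
      split_ifs at this ⊢ <;> omega
    · subst h
      rw [if_neg (by omega), if_pos (by omega)]
      exact hσn
    · rw [hsp.2 x (by rw [abs_of_nonneg hx]; omega), if_neg (by omega), if_neg (by omega)]

lemma eq_Wp (n : ℕ) (hn : 1 ≤ n) (σ : Equiv.Perm ℤ) (hsp : IsSignedPerm n σ)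
    (a : ℤ) (ha1 : 1 ≤ a) (han : a ≤ (n:ℤ)) (hσn : σ (n:ℤ) = -a)
    (hF : invCount n σ + negCount n σ
      ≤ 2 * ((n:ℤ) - 1).toNat + 2 * (a - 1).toNat + 2) :
    σ = Wp (a - 1).toNat ((n:ℤ) - a).toNat := by
  have hpos : ∀ k : ℤ, 1 ≤ k → k ≤ (n:ℤ) - 1 → 0 < σ k := by
    intro k h1 h2
    have hnz := sp_ne_zero hsp (k := k) (by omega)
    by_contra hc
    push_neg at hc
    have hneg : σ k < 0 := by omega
    have h3 := inv_lb_neg n hn σ hsp a ha1 han hσn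
    have h4 := neg_lb2 n hn σ (by omega) k h1 h2 hneg
    omega
  have hmono : ∀ i : ℤ, 1 ≤ i → i ≤ (n:ℤ) - 2 → σ i < σ (i+1) := by
    intro i h1 h2
    have hnei : σ i ≠ σ (i+1) := fun h => by
      have := σ.injective h; omega
    by_contra hc
    push_neg at hc
    have h3 := inv_lb_neg_desc n hn σ hsp a ha1 han hσn i h1 (by omega) (by omega)
    have h4 := neg_lb1 n hn σ (by omega)
    omega
  have hcl := classify n hn σ hsp a ha1 han hpos hmono (Or.inr hσn)
  have hcast : (((n:ℤ) - a).toNat : ℤ) = (n:ℤ) - a := by omega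
  have hcast2 : (((a - 1).toNat : ℕ) : ℤ) = a - 1 := by omega
  apply sp_ext hsp (Wp_sp n _ _ (by rw [hcast, hcast2]; omega))
  intro x hx
  rw [Wp_apply _ _ x hx, hcast, hcast2]
  rcases eq_or_ne x 0 with rfl | hx0
  · rw [sp_zero hsp, if_neg (by omega), if_neg (by omega)]
  · rcases lt_trichotomy x (n:ℤ) with h | h | h
    · have := hcl x (by omega) (by omega)
      split_ifs at this ⊢ <;> omega
    · subst h
      rw [if_neg (by omega), if_pos (by omega)]
      omega
    · rw [hsp.2 x (by rw [abs_of_nonneg hx]; omega), if_neg (by omega), if_neg (by omega)]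

lemma Vp_n (n : ℕ) (a : ℤ) (c : ℕ) (ha1 : 1 ≤ a) (hac : a + c = (n:ℤ)) :
    Vp a c (n:ℤ) = a := by
  rw [Vp_apply a c ha1 (n:ℤ) (by omega), if_neg (by omega), if_pos (by omega)]

lemma Wp_n (n : ℕ) (b c : ℕ) (hbc : (b:ℤ) + 1 + c = (n:ℤ)) :
    Wp b c (n:ℤ) = -((b:ℤ)+1) := by
  rw [Wp_apply b c (n:ℤ) (by omega), if_neg (by omega), if_pos (by omega)]

lemma Vp_wordLen (n : ℕ) (hn : 1 ≤ n) (a : ℤ) (c : ℕ) (ha1 : 1 ≤ a) (hac : a + c = (n:ℤ)) :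
    wordLen (BGens n) (Vp a c) = c := by
  have hmem : ∀ x ∈ vword a c, x ∈ BGens n := by
    intro x hx
    obtain ⟨i, h1, h2, rfl⟩ := vword_mem a c x hx
    exact ⟨i, ⟨by omega, by omega⟩, rfl⟩
  have hle : wordLen (BGens n) (Vp a c) ≤ c := by
    have := wordLen_le (S := BGens n) (σ := Vp a c) (vword a c) hmem rfl
    rwa [vword_length] at this
  have hsp := Vp_sp n a c ha1 (by omega)
  have hlow := wordLen_lower n hn (Vp a c) ⟨vword a c, hmem, rfl⟩
  have hinv := inv_lb_pos n hn (Vp a c) hsp a ha1 (by omega) (Vp_n n a c ha1 hac)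
  omega

lemma Wp_wordLen (n : ℕ) (hn : 1 ≤ n) (b c : ℕ) (hbc : (b:ℤ) + 1 + c = (n:ℤ)) :
    wordLen (BGens n) (Wp b c) = 2*b + 1 + c := by
  have hmem : ∀ x ∈ cword b ++ vword ((b:ℤ)+1) c, x ∈ BGens n := by
    intro x hx
    rcases List.mem_append.mp hx with h | h
    · obtain ⟨i, h1, h2, rfl⟩ := cword_mem b x h
      exact ⟨i, ⟨by omega, by omega⟩, rfl⟩
    · obtain ⟨i, h1, h2, rfl⟩ := vword_mem ((b:ℤ)+1) c x h
      exact ⟨i, ⟨by omega, by omega⟩, rfl⟩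
  have hprod : (cword b ++ vword ((b:ℤ)+1) c).prod = Wp b c := by
    rw [List.prod_append, Wp, Cp, Vp]
  have hle : wordLen (BGens n) (Wp b c) ≤ 2*b + 1 + c := by
    have := wordLen_le (S := BGens n) (σ := Wp b c) _ hmem hprod
    rwa [List.length_append, cword_length, vword_length] at this
  have hspw := Wp_sp n b c (by omega)
  have hlow := wordLen_lower n hn (Wp b c) ⟨_, hmem, hprod⟩
  have hinv := inv_lb_neg n hn (Wp b c) hspw ((b:ℤ)+1) (by omega) (by omega)
    (Wp_n n b c hbc)
  have hneg := neg_lb1 n hn (Wp b c) (by rw [Wp_n n b c hbc]; omega)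
  omega

lemma Wp_step (b c : ℕ) : Wp (b+1) c = bgen ((b:ℤ)+2) * Wp b (c+1) := by
  set m : ℕ := b + 2 + c with hm
  have h1 : IsSignedPerm m (Wp (b+1) c) := Wp_sp m (b+1) c (by push_cast; omega)
  have h2 : IsSignedPerm m (bgen ((b:ℤ)+2) * Wp b (c+1)) :=
    sp_mul (sp_bgen (by omega) (by push_cast; omega)) (Wp_sp m b (c+1) (by push_cast; omega))
  apply sp_ext h1 h2
  intro x hx
  have e : (bgen ((b:ℤ)+2) * Wp b (c+1)) x = bgen ((b:ℤ)+2) (Wp b (c+1) x) := rfl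
  rw [e, Wp_apply b (c+1) x hx, Wp_apply (b+1) c x hx, bgen_apply _ _ (by omega)]
  push_cast
  split_ifs <;> omega

lemma chainV (n : ℕ) (hn : 1 ≤ n) :
    ∀ (j : ℕ) (a : ℤ) (c : ℕ), 1 ≤ a → a + c = (n:ℤ) → a = 1 + j →
      bruhat (BGens n) (Vp a c) (Vp 1 (n-1)) := by
  intro j
  induction j with
  | zero =>
    intro a c h1 h2 h3
    have : a = 1 := by omega
    subst this
    have : c = n - 1 := by omega
    subst this
    exact Relation.ReflTransGen.refl
  | succ j ih =>
    intro a c h1 h2 h3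
    apply Relation.ReflTransGen.head (b := Vp (a-1) (c+1))
    · constructor
      · refine ⟨bgen a, ⟨1, Subgroup.one_mem _, bgen a, ⟨a, ⟨by omega, by omega⟩, rfl⟩, ?_⟩, ?_⟩
        · group
        · have := Vp_succ (a-1) c
          rw [show a - 1 + 1 = a by ring] at this
          exact this.symm ▸ rfl
      · rw [Vp_wordLen n hn a c (by omega) h2,
          Vp_wordLen n hn (a-1) (c+1) (by omega) (by push_cast; omega)]
        omega
    · exact ih (a-1) (c+1) (by omega) (by push_cast; omega) (by push_cast at h3 ⊢; omega)

lemma chainW (n : ℕ) (hn : 1 ≤ n) :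
    ∀ (b c : ℕ), (b:ℤ) + 1 + c = (n:ℤ) →
      bruhat (BGens n) (Wp 0 (n-1)) (Wp b c) := by
  intro b
  induction b with
  | zero =>
    intro c h
    have : c = n - 1 := by omega
    subst this
    exact Relation.ReflTransGen.refl
  | succ b ih =>
    intro c h
    apply Relation.ReflTransGen.tail (b := Wp b (c+1))
    · exact ih (c+1) (by push_cast at h ⊢; omega)
    · constructor
      · exact ⟨bgen ((b:ℤ)+2), ⟨1, Subgroup.one_mem _, bgen ((b:ℤ)+2),
          ⟨(b:ℤ)+2, ⟨by omega, by push_cast at h; omega⟩, rfl⟩, by group⟩, (Wp_step b c).symm ▸ rfl⟩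
      · rw [Wp_wordLen n hn b (c+1) (by push_cast at h ⊢; omega),
          Wp_wordLen n hn (b+1) c (by push_cast at h ⊢; omega)]
        omega

lemma bruhat_len (S : Set (Equiv.Perm ℤ)) (x y : Equiv.Perm ℤ) (h : bruhat S x y) :
    x = y ∨ wordLen S x < wordLen S y := by
  induction h with
  | refl => exact Or.inl rfl
  | tail h1 h2 ih =>
    right
    rcases ih with rfl | hlt
    · exact h2.2
    · exact lt_trans hlt h2.2

lemma wAct_omega (n : ℕ) (hn : 1 ≤ n) (u : Equiv.Perm ℤ) (hsp : IsSignedPerm n u) (t : ℤ) :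
    wAct u (omegaWt n n) t
      = if t = u (n:ℤ) then 1 else if t = -(u (n:ℤ)) then -1 else 0 := by
  simp only [wAct, omegaWt]
  by_cases h1 : t = u (n:ℤ)
  · have hui : u⁻¹ t = (n:ℤ) := by rw [h1]; exact u.symm_apply_apply _
    rw [hui, if_pos (by omega : (0:ℤ) < (n:ℤ)), if_pos ⟨le_rfl, le_rfl⟩, if_pos h1]
  · by_cases h2 : t = -(u (n:ℤ))
    · have hui : u⁻¹ t = -(n:ℤ) := by
        rw [h2, show -(u (n:ℤ)) = u (-(n:ℤ)) from (hsp.1 _).symm]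
        exact u.symm_apply_apply _
      rw [hui, if_neg (by omega), if_neg h1, if_pos h2, neg_neg,
        if_pos ⟨le_rfl, le_rfl⟩]
    · have hm1 : u⁻¹ t ≠ (n:ℤ) := by
        intro hc
        apply h1
        rw [← show u (u⁻¹ t) = t from u.apply_symm_apply t, hc]
      have hm2 : u⁻¹ t ≠ -(n:ℤ) := by
        intro hc
        apply h2
        rw [← show u (u⁻¹ t) = t from u.apply_symm_apply t, hc, hsp.1]
      rw [if_neg h1, if_neg h2]
      by_cases h3 : 0 < u⁻¹ t
      · rw [if_pos h3, if_neg (by omega)]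
      · rw [if_neg h3, if_neg (by omega)]
        norm_num

lemma nonneg_pos (n : ℕ) (hn : 1 ≤ n) (u : Equiv.Perm ℤ) (husp : IsSignedPerm n u)
    (hnn : NonnegBC n (wAct u (omegaWt n n))) : 0 < u (n:ℤ) := by
  have h0 := sp_ne_zero husp (k := (n:ℤ)) (by omega)
  have habs := sp_abs_le husp (k := (n:ℤ)) (by rw [abs_of_nonneg (by omega)])
  have habs2 : -(n:ℤ) ≤ u (n:ℤ) ∧ u (n:ℤ) ≤ (n:ℤ) := by
    rcases abs_cases (u (n:ℤ)) with ⟨e,_⟩ | ⟨e,_⟩ <;> omega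
  by_contra hc
  push_neg at hc
  have hneg : u (n:ℤ) < 0 := by omega
  have hk := hnn (-u (n:ℤ)) (Finset.mem_Icc.mpr ⟨by omega, by omega⟩)
  have hsum : ∑ j ∈ Finset.Icc (-u (n:ℤ)) (n:ℤ), wAct u (omegaWt n n) j = -1 := by
    rw [Finset.sum_eq_single_of_mem (-u (n:ℤ)) (Finset.mem_Icc.mpr ⟨le_rfl, by omega⟩)]
    · rw [wAct_omega n hn u husp, if_neg (by omega), if_pos rfl]
    · intro j hj hne
      simp only [Finset.mem_Icc] at hj
      rw [wAct_omega n hn u husp, if_neg (by omega), if_neg (by omega)]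
  rw [hsum] at hk
  norm_num at hk

lemma nonpos_neg (n : ℕ) (hn : 1 ≤ n) (u : Equiv.Perm ℤ) (husp : IsSignedPerm n u)
    (hnp : NonposBC n (wAct u (omegaWt n n))) : u (n:ℤ) < 0 := by
  have h0 := sp_ne_zero husp (k := (n:ℤ)) (by omega)
  have habs := sp_abs_le husp (k := (n:ℤ)) (by rw [abs_of_nonneg (by omega)])
  have habs2 : -(n:ℤ) ≤ u (n:ℤ) ∧ u (n:ℤ) ≤ (n:ℤ) := by
    rcases abs_cases (u (n:ℤ)) with ⟨e,_⟩ | ⟨e,_⟩ <;> omega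
  by_contra hc
  push_neg at hc
  have hpos : 0 < u (n:ℤ) := by omega
  have hk := hnp (u (n:ℤ)) (Finset.mem_Icc.mpr ⟨by omega, by omega⟩)
  have hsum : ∑ j ∈ Finset.Icc (u (n:ℤ)) (n:ℤ), wAct u (omegaWt n n) j = 1 := by
    rw [Finset.sum_eq_single_of_mem (u (n:ℤ)) (Finset.mem_Icc.mpr ⟨le_rfl, by omega⟩)]
    · rw [wAct_omega n hn u husp, if_pos rfl]
    · intro j hj hne
      simp only [Finset.mem_Icc] at hj
      rw [wAct_omega n hn u husp, if_neg (by omega), if_neg (by omega)]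
  rw [hsum] at hk
  norm_num at hk

/-- in type `B_n`/`C_n` for `r = n`, `v = (2,3,…,n,1)` is the unique maximal
element of `W^{I_n}` with `v(ω_n) ≥ 0`, and `w = (2,3,…,n,-1) = s_1 v` is the unique
minimal element of `W^{I_n}` with `w(ω_n) ≤ 0`; moreover `w(ω_n) = -v(ω_n)`. -/
theorem extreme_elements_r_eq_n_BC (n : ℕ) (hn : 1 ≤ n) (v w : Equiv.Perm ℤ)
    (hv : IsSignedPerm n v) (hw0 : IsSignedPerm n w)
    (hv1 : ∀ k : ℤ, 1 ≤ k → k ≤ (n : ℤ) - 1 → v k = k + 1) (hvn : v (n : ℤ) = 1)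
    (hw1 : ∀ k : ℤ, 1 ≤ k → k ≤ (n : ℤ) - 1 → w k = k + 1) (hwn : w (n : ℤ) = -1) :
    IsMinRepB n n v ∧ NonnegBC n (wAct v (omegaWt n n)) ∧
    (∀ u, IsMinRepB n n u → NonnegBC n (wAct u (omegaWt n n)) →
      bruhat (BGens n) v u → u = v) ∧
    (∀ u, IsMinRepB n n u → NonnegBC n (wAct u (omegaWt n n)) →
      (∀ u', IsMinRepB n n u' → NonnegBC n (wAct u' (omegaWt n n)) →
        bruhat (BGens n) u u' → u' = u) → u = v) ∧
    w = bgen 1 * v ∧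
    IsMinRepB n n w ∧ NonposBC n (wAct w (omegaWt n n)) ∧
    (∀ u, IsMinRepB n n u → NonposBC n (wAct u (omegaWt n n)) →
      bruhat (BGens n) u w → u = w) ∧
    (∀ u, IsMinRepB n n u → NonposBC n (wAct u (omegaWt n n)) →
      (∀ u', IsMinRepB n n u' → NonposBC n (wAct u' (omegaWt n n)) →
        bruhat (BGens n) u' u → u' = u) → u = w) ∧
    ∀ t : ℤ, wAct w (omegaWt n n) t = -wAct v (omegaWt n n) t := by
  have hcast1 : (1:ℤ) + ((n - 1 : ℕ) : ℤ) = (n:ℤ) := by omega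
  -- v = Vp 1 (n-1)
  have hveq : v = Vp 1 (n-1) := by
    apply sp_ext hv (Vp_sp n 1 (n-1) le_rfl (by omega))
    intro x hx
    rw [Vp_apply 1 (n-1) le_rfl x hx, hcast1]
    rcases eq_or_ne x 0 with rfl | hx0
    · rw [sp_zero hv, if_neg (by omega), if_neg (by omega)]
    · rcases lt_trichotomy x (n:ℤ) with h | h | h
      · rw [if_pos ⟨by omega, h⟩]
        exact hv1 x (by omega) (by omega)
      · subst h
        rw [if_neg (by omega), if_pos rfl]
        exact hvn
      · rw [hv.2 x (by rw [abs_of_nonneg hx]; omega), if_neg (by omega), if_neg (by omega)]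
  have hweq : w = Wp 0 (n-1) := by
    apply sp_ext hw0 (Wp_sp n 0 (n-1) (by push_cast; omega))
    intro x hx
    rw [Wp_apply 0 (n-1) x hx]
    simp only [Nat.cast_zero, zero_add]
    rw [hcast1]
    rcases eq_or_ne x 0 with rfl | hx0
    · rw [sp_zero hw0, if_neg (by omega), if_neg (by omega)]
    · rcases lt_trichotomy x (n:ℤ) with h | h | h
      · rw [if_pos ⟨by omega, h⟩]
        exact hw1 x (by omega) (by omega)
      · subst h
        rw [if_neg (by omega), if_pos rfl]
        rw [hwn]
      · rw [hw0.2 x (by rw [abs_of_nonneg hx]; omega), if_neg (by omega), if_neg (by omega)]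
  have hlenv : wordLen (BGens n) v = n - 1 := by
    rw [hveq]; exact Vp_wordLen n hn 1 (n-1) le_rfl (by omega)
  have hlenw : wordLen (BGens n) w = n := by
    rw [hweq, Wp_wordLen n hn 0 (n-1) (by push_cast; omega)]
    omega
  -- conjunct 1
  have conj1 : IsMinRepB n n v := by
    refine ⟨hv, ?_⟩
    intro u hu
    obtain ⟨husp, hufix⟩ := closure_sub_prop n hn u hu
    obtain ⟨lu, hlu1, hlu2⟩ := sp_word n hn u husp
    have hmem : ∀ x ∈ vword 1 (n-1) ++ lu, x ∈ BGens n := by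
      intro x hx
      rcases List.mem_append.mp hx with h | h
      · obtain ⟨i, h1, h2, rfl⟩ := vword_mem 1 (n-1) x h
        exact ⟨i, ⟨by omega, by omega⟩, rfl⟩
      · exact hlu1 x h
    have hprod : (vword 1 (n-1) ++ lu).prod = v * u := by
      rw [List.prod_append, hlu2, show (vword 1 (n-1)).prod = Vp 1 (n-1) from rfl, ← hveq]
    have hlow := wordLen_lower n hn (v * u) ⟨_, hmem, hprod⟩
    have hinv := inv_lb_pos n hn (v * u) (sp_mul hv husp) 1 le_rfl (by omega)
      (by rw [Equiv.Perm.mul_apply, hufix, hvn])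
    rw [hlenv]
    omega
  -- conjunct 2
  have conj2 : NonnegBC n (wAct v (omegaWt n n)) := by
    intro k hk
    simp only [Finset.mem_Icc] at hk
    apply Finset.sum_nonneg
    intro j hj
    simp only [Finset.mem_Icc] at hj
    rw [wAct_omega n hn v hv, hvn]
    split_ifs
    · norm_num
    · exfalso; omega
    · exact le_refl 0
  -- conjunct 7
  have conj7 : NonposBC n (wAct w (omegaWt n n)) := by
    intro k hk
    simp only [Finset.mem_Icc] at hk
    apply Finset.sum_nonpos
    intro j hj
    simp only [Finset.mem_Icc] at hj
    rw [wAct_omega n hn w hw0, hwn]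
    split_ifs
    · exfalso; omega
    · norm_num
    · exact le_refl 0
  -- conjunct 6
  have conj6 : IsMinRepB n n w := by
    refine ⟨hw0, ?_⟩
    intro u hu
    obtain ⟨husp, hufix⟩ := closure_sub_prop n hn u hu
    obtain ⟨lu, hlu1, hlu2⟩ := sp_word n hn u husp
    have hmem : ∀ x ∈ (cword 0 ++ vword 1 (n-1)) ++ lu, x ∈ BGens n := by
      intro x hx
      rcases List.mem_append.mp hx with h | h
      · rcases List.mem_append.mp h with h' | h'
        · obtain ⟨i, h1, h2, rfl⟩ := cword_mem 0 x h'
          exact ⟨i, ⟨by omega, by omega⟩, rfl⟩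
        · obtain ⟨i, h1, h2, rfl⟩ := vword_mem 1 (n-1) x h'
          exact ⟨i, ⟨by omega, by omega⟩, rfl⟩
      · exact hlu1 x h
    have hprod : ((cword 0 ++ vword 1 (n-1)) ++ lu).prod = w * u := by
      rw [List.prod_append, hlu2, List.prod_append, hweq]
      congr 1
    have hwun : (w * u) (n:ℤ) = -1 := by
      rw [Equiv.Perm.mul_apply, hufix, hwn]
    have hlow := wordLen_lower n hn (w * u) ⟨_, hmem, hprod⟩
    have hinv := inv_lb_neg n hn (w * u) (sp_mul hw0 husp) 1 le_rfl (by omega) (by omega)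
    have hng := neg_lb1 n hn (w * u) (by omega)
    rw [hlenw]
    omega
  -- conjunct 3
  have conj3 : ∀ u, IsMinRepB n n u → NonnegBC n (wAct u (omegaWt n n)) →
      bruhat (BGens n) v u → u = v := by
    intro u hu hnn hbr
    obtain ⟨husp, humin⟩ := hu
    have ha1 : 0 < u (n:ℤ) := nonneg_pos n hn u husp hnn
    have habs := sp_abs_le husp (k := (n:ℤ)) (by rw [abs_of_nonneg (by omega)])
    have han : u (n:ℤ) ≤ (n:ℤ) := by
      rcases abs_cases (u (n:ℤ)) with ⟨e,_⟩ | ⟨e,_⟩ <;> omega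
    set a := u (n:ℤ) with hadef
    set c := ((n:ℤ) - a).toNat with hcdef
    have hac : a + (c:ℤ) = (n:ℤ) := by omega
    have hτn : Vp a c (n:ℤ) = a := Vp_n n a c (by omega) hac
    have hfix : (u⁻¹ * Vp a c) (n:ℤ) = (n:ℤ) := by
      rw [Equiv.Perm.mul_apply, hτn, hadef]
      exact u.symm_apply_apply _
    have hssub : IsSignedPerm (n-1) (u⁻¹ * Vp a c) :=
      sp_fix_n n hn _ (sp_mul (sp_inv husp) (Vp_sp n a c (by omega) (by omega))) hfix
    have hup := humin _ (fix_mem_closure n hn _ hssub)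
    rw [mul_inv_cancel_left, Vp_wordLen n hn a c (by omega) hac] at hup
    rcases bruhat_len _ _ _ hbr with h | h
    · exact h.symm
    · rw [hlenv] at h
      omega
  -- conjunct 4
  have conj4 : ∀ u, IsMinRepB n n u → NonnegBC n (wAct u (omegaWt n n)) →
      (∀ u', IsMinRepB n n u' → NonnegBC n (wAct u' (omegaWt n n)) →
        bruhat (BGens n) u u' → u' = u) → u = v := by
    intro u hu hnn hmax
    obtain ⟨husp, humin⟩ := hu
    have ha1 : 0 < u (n:ℤ) := nonneg_pos n hn u husp hnn
    have habs := sp_abs_le husp (k := (n:ℤ)) (by rw [abs_of_nonneg (by omega)])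
    have han : u (n:ℤ) ≤ (n:ℤ) := by
      rcases abs_cases (u (n:ℤ)) with ⟨e,_⟩ | ⟨e,_⟩ <;> omega
    set a := u (n:ℤ) with hadef
    set c := ((n:ℤ) - a).toNat with hcdef
    have hac : a + (c:ℤ) = (n:ℤ) := by omega
    have hτn : Vp a c (n:ℤ) = a := Vp_n n a c (by omega) hac
    have hfix : (u⁻¹ * Vp a c) (n:ℤ) = (n:ℤ) := by
      rw [Equiv.Perm.mul_apply, hτn, hadef]
      exact u.symm_apply_apply _
    have hssub : IsSignedPerm (n-1) (u⁻¹ * Vp a c) :=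
      sp_fix_n n hn _ (sp_mul (sp_inv husp) (Vp_sp n a c (by omega) (by omega))) hfix
    have hup := humin _ (fix_mem_closure n hn _ hssub)
    rw [mul_inv_cancel_left, Vp_wordLen n hn a c (by omega) hac] at hup
    obtain ⟨lu, hlu1, hlu2⟩ := sp_word n hn u husp
    have hlow := wordLen_lower n hn u ⟨lu, hlu1, hlu2⟩
    have hF : invCount n u + negCount n u ≤ 2 * c := by omega
    have hueq : u = Vp a c := eq_Vp n hn u husp a (by omega) han rfl hF
    have hchain := chainV n hn (a-1).toNat a c (by omega) hac (by omega)
    rw [← hueq, ← hveq] at hchain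
    exact (hmax v conj1 conj2 hchain).symm
  -- conjunct 5
  have conj5 : w = bgen 1 * v := by
    rw [hveq, hweq, Wp]
    have hc0 : Cp 0 = bgen 1 := by rw [Cp, cword, List.prod_singleton]
    rw [hc0]
    norm_num
  -- conjunct 8
  have conj8 : ∀ u, IsMinRepB n n u → NonposBC n (wAct u (omegaWt n n)) →
      bruhat (BGens n) u w → u = w := by
    intro u hu hnp hbr
    obtain ⟨husp, humin⟩ := hu
    have ha1 : u (n:ℤ) < 0 := nonpos_neg n hn u husp hnp
    have habs := sp_abs_le husp (k := (n:ℤ)) (by rw [abs_of_nonneg (by omega)])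
    have han : -(n:ℤ) ≤ u (n:ℤ) := by
      rcases abs_cases (u (n:ℤ)) with ⟨e,_⟩ | ⟨e,_⟩ <;> omega
    obtain ⟨lu, hlu1, hlu2⟩ := sp_word n hn u husp
    have hlow := wordLen_lower n hn u ⟨lu, hlu1, hlu2⟩
    have hinv := inv_lb_neg n hn u husp (-u (n:ℤ)) (by omega) (by omega) (by omega)
    have hng := neg_lb1 n hn u ha1
    rcases bruhat_len _ _ _ hbr with h | h
    · exact h
    · rw [hlenw] at h
      omega
  -- conjunct 9
  have conj9 : ∀ u, IsMinRepB n n u → NonposBC n (wAct u (omegaWt n n)) →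
      (∀ u', IsMinRepB n n u' → NonposBC n (wAct u' (omegaWt n n)) →
        bruhat (BGens n) u' u → u' = u) → u = w := by
    intro u hu hnp hmin
    obtain ⟨husp, humin⟩ := hu
    have ha1 : u (n:ℤ) < 0 := nonpos_neg n hn u husp hnp
    have habs := sp_abs_le husp (k := (n:ℤ)) (by rw [abs_of_nonneg (by omega)])
    have han : -(n:ℤ) ≤ u (n:ℤ) := by
      rcases abs_cases (u (n:ℤ)) with ⟨e,_⟩ | ⟨e,_⟩ <;> omega
    set a := -u (n:ℤ) with hadef
    set b := (a-1).toNat with hbdef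
    set c := ((n:ℤ) - a).toNat with hcdef
    have hbc : (b:ℤ) + 1 + c = (n:ℤ) := by omega
    have hτn : Wp b c (n:ℤ) = u (n:ℤ) := by
      rw [Wp_n n b c hbc]
      omega
    have hfix : (u⁻¹ * Wp b c) (n:ℤ) = (n:ℤ) := by
      rw [Equiv.Perm.mul_apply, hτn]
      exact u.symm_apply_apply _
    have hssub : IsSignedPerm (n-1) (u⁻¹ * Wp b c) :=
      sp_fix_n n hn _ (sp_mul (sp_inv husp) (Wp_sp n b c (by omega))) hfix
    have hup := humin _ (fix_mem_closure n hn _ hssub)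
    rw [mul_inv_cancel_left, Wp_wordLen n hn b c hbc] at hup
    obtain ⟨lu, hlu1, hlu2⟩ := sp_word n hn u husp
    have hlow := wordLen_lower n hn u ⟨lu, hlu1, hlu2⟩
    have hF : invCount n u + negCount n u
        ≤ 2 * ((n:ℤ) - 1).toNat + 2 * (a - 1).toNat + 2 := by omega
    have hueq : u = Wp b c := eq_Wp n hn u husp a (by omega) (by omega) (by omega) hF
    have hchain := chainW n hn b c hbc
    rw [← hueq, ← hweq] at hchain
    exact (hmin w conj6 conj7 hchain).symm
  -- conjunct 10
  have conj10 : ∀ t : ℤ, wAct w (omegaWt n n) t = -wAct v (omegaWt n n) t := by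
    intro t
    rw [wAct_omega n hn w hw0, wAct_omega n hn v hv, hwn, hvn]
    split_ifs <;> first | (exfalso; omega) | norm_num
  exact ⟨conj1, conj2, conj3, conj4, conj5, conj6, conj7, conj8, conj9, conj10⟩
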